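/- arXiv:0709.0854 — 4 statements merged into one kernel-verified Lean document; each statement's English description precedes it below -/
import Mathlib

section
/- Let ψ : ℤ_{≥0} → ℝ_{>0} be non-increasing and 1 ≤ ℓ ≤ n. If ∑_{h=1}^∞ h^{n-1} ψ(h) < ∞, then the set of α ∈ ℝⁿ such that ‖x₁α₁ + ⋯ + xₙαₙ‖ ≤ ψ(H(x)) for infinitely many x ∈ ℤⁿ with max{|x_{ℓ+1}|,...,|xₙ|} < max{|x₁|,...,|x_ℓ|} has Lebesgue measure zero. -/
open Finset MeasureTheory Filter
open scoped ENNReal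

/-- Distance to the nearest integer. -/
noncomputable def dnint (r : ℝ) : ℝ := |r - round r|

/-- Height of an integer vector: maximum of absolute values of coordinates. -/
def Hgt {n : ℕ} (x : Fin n → ℤ) : ℕ := Finset.univ.sup fun i => (x i).natAbs

/-- The cone condition: the height is attained among the first `ℓ` coordinates. -/
def cone {n : ℕ} (ℓ : ℕ) (x : Fin n → ℤ) : Prop :=
  ((Finset.univ.filter fun i : Fin n => ℓ ≤ (i : ℕ)).sup fun i => (x i).natAbs) <
  ((Finset.univ.filter fun i : Fin n => (i : ℕ) < ℓ).sup fun i => (x i).natAbs)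

/-- The restricted Diophantine exponent `μ_{n,ℓ}(α)`. -/
noncomputable def mu (n ℓ : ℕ) (α : Fin n → ℝ) : ℝ :=
  sSup {m : ℝ | 0 ≤ m ∧ {x : Fin n → ℤ | cone ℓ x ∧
    0 < dnint (∑ i, (x i : ℝ) * α i) ∧
    dnint (∑ i, (x i : ℝ) * α i) ≤ (Hgt x : ℝ) ^ (-m)}.Infinite}

lemma dnint_nonneg (r : ℝ) : 0 ≤ dnint r := abs_nonneg _

lemma dnint_le (r : ℝ) (k : ℤ) : dnint r ≤ |r - k| := round_le r k

lemma dnint_neg (r : ℝ) : dnint (-r) = dnint r := by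
  have key : ∀ s : ℝ, dnint (-s) ≤ dnint s := by
    intro s
    have := dnint_le (-s) (-round s)
    refine this.trans_eq ?_
    unfold dnint
    push_cast
    rw [← abs_neg]
    ring_nf
  refine le_antisymm (key r) ?_
  have := key (-r)
  rwa [neg_neg] at this

lemma dnint_add_int (r : ℝ) (k : ℤ) : dnint (r + k) = dnint r := by
  unfold dnint
  rw [round_add_intCast]
  push_cast
  ring_nf

lemma measurable_dnint : Measurable dnint := by
  have h : Measurable (round : ℝ → ℤ) := by
    have : (round : ℝ → ℤ) = fun r => ⌊r + 1/2⌋ := by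
      funext r; exact round_eq r
    rw [this]
    exact (measurable_id.add_const _).floor
  have : Measurable fun r : ℝ => ((round r : ℤ) : ℝ) := measurable_from_top.comp h
  exact (measurable_id.sub this).abs

lemma oneD_pos (m : ℤ) (hm : 0 < m) (c ε : ℝ) (hε : 0 ≤ ε) :
    volume {t : ℝ | t ∈ Set.Ico (0:ℝ) 1 ∧ dnint (c + m * t) ≤ ε} ≤ ENNReal.ofReal (4 * ε) := by
  rcases le_or_gt (1/4 : ℝ) ε with h | h
  · calc volume {t : ℝ | t ∈ Set.Ico (0:ℝ) 1 ∧ dnint (c + m * t) ≤ ε}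
        ≤ volume (Set.Ico (0:ℝ) 1) := measure_mono (fun t ht => ht.1)
      _ = 1 := by simp [Real.volume_Ico]
      _ ≤ ENNReal.ofReal (4 * ε) := by
          rw [← ENNReal.ofReal_one]
          exact ENNReal.ofReal_le_ofReal (by linarith)
  · have hm' : (0:ℝ) < m := by exact_mod_cast hm
    set K := Finset.Icc ⌈c - ε⌉ ⌊c + m + ε⌋ with hK
    have hsub : {t : ℝ | t ∈ Set.Ico (0:ℝ) 1 ∧ dnint (c + m * t) ≤ ε} ⊆
        ⋃ k ∈ K, Set.Icc (((k:ℝ) - c - ε)/m) (((k:ℝ) - c + ε)/m) := by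
      rintro t ⟨⟨ht0, ht1⟩, hd⟩
      set k := round (c + m * t) with hk
      have habs : |c + m * t - k| ≤ ε := hd
      rw [abs_le] at habs
      have hmt0 : (0:ℝ) ≤ m * t := by positivity
      have hmt1 : (m:ℝ) * t ≤ m := by nlinarith
      have hkK : k ∈ K := by
        rw [hK, Finset.mem_Icc]
        constructor
        · exact Int.ceil_le.mpr (by push_cast; linarith [habs.2])
        · exact Int.le_floor.mpr (by push_cast; linarith [habs.1])
      refine Set.mem_biUnion hkK ?_
      constructor
      · rw [div_le_iff₀ hm']; linarith [habs.2]
      · rw [le_div_iff₀ hm']; linarith [habs.1]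
    have hcard : (K.card : ℝ) ≤ (m:ℝ) + 1 := by
      have hfl : (⌊c + m + ε⌋ : ℝ) ≤ c + m + ε := Int.floor_le _
      have hcl : c - ε ≤ (⌈c - ε⌉ : ℝ) := Int.le_ceil _
      have hlt : ⌊c + m + ε⌋ < ⌈c - ε⌉ + m + 1 := by
        have : (⌊c + m + ε⌋ : ℝ) < ((⌈c - ε⌉ + m + 1 : ℤ) : ℝ) := by push_cast; linarith
        exact_mod_cast this
      have hcardZ : (K.card : ℤ) ≤ m + 1 := by
        rw [hK, Int.card_Icc]; omega
      exact_mod_cast hcardZ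
    calc volume {t : ℝ | t ∈ Set.Ico (0:ℝ) 1 ∧ dnint (c + m * t) ≤ ε}
        ≤ volume (⋃ k ∈ K, Set.Icc (((k:ℝ) - c - ε)/m) (((k:ℝ) - c + ε)/m)) :=
          measure_mono hsub
      _ ≤ ∑ k ∈ K, volume (Set.Icc (((k:ℝ) - c - ε)/m) (((k:ℝ) - c + ε)/m)) :=
          measure_biUnion_finset_le K _
      _ = ∑ k ∈ K, ENNReal.ofReal (2 * ε / m) := by
          refine Finset.sum_congr rfl fun k _ => ?_
          rw [Real.volume_Icc]
          congr 1
          field_simp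
          ring
      _ = K.card * ENNReal.ofReal (2 * ε / m) := by
          rw [Finset.sum_const, nsmul_eq_mul]
      _ ≤ ENNReal.ofReal (4 * ε) := by
          rw [← ENNReal.ofReal_natCast K.card, ← ENNReal.ofReal_mul (by positivity)]
          apply ENNReal.ofReal_le_ofReal
          rw [mul_div_assoc', div_le_iff₀ hm']
          calc (K.card : ℝ) * (2 * ε) ≤ ((m:ℝ) + 1) * (2 * ε) := by nlinarith
            _ ≤ 4 * ε * m := by
                have hm1 : (1:ℝ) ≤ m := by exact_mod_cast hm
                nlinarith

lemma oneD (m : ℤ) (hm : m ≠ 0) (c ε : ℝ) (hε : 0 ≤ ε) :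
    volume {t : ℝ | t ∈ Set.Ico (0:ℝ) 1 ∧ dnint (c + m * t) ≤ ε} ≤ ENNReal.ofReal (4 * ε) := by
  rcases hm.lt_or_gt with h | h
  · have heq : {t : ℝ | t ∈ Set.Ico (0:ℝ) 1 ∧ dnint (c + m * t) ≤ ε}
        = {t : ℝ | t ∈ Set.Ico (0:ℝ) 1 ∧ dnint (-c + (-m : ℤ) * t) ≤ ε} := by
      ext t
      simp only [Set.mem_setOf_eq, and_congr_right_iff]
      intro _
      have : (-c + ((-m : ℤ) : ℝ) * t) = -(c + m * t) := by push_cast; ring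
      rw [this, dnint_neg]
    rw [heq]
    exact oneD_pos (-m) (by omega) (-c) ε hε
  · exact oneD_pos m h c ε hε

lemma slice_bound {n : ℕ} (x : Fin (n+1) → ℤ) (i : Fin (n+1)) (hx : x i ≠ 0) (ε : ℝ)
    (hε : 0 ≤ ε) :
    volume {α : Fin (n+1) → ℝ | (∀ j, α j ∈ Set.Ico (0:ℝ) 1) ∧
      dnint (∑ j, (x j : ℝ) * α j) ≤ ε} ≤ ENNReal.ofReal (4 * ε) := by
  set A : Set (Fin (n+1) → ℝ) := {α | (∀ j, α j ∈ Set.Ico (0:ℝ) 1) ∧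
      dnint (∑ j, (x j : ℝ) * α j) ≤ ε} with hA
  have hmeasA : MeasurableSet A := by
    have h1 : MeasurableSet {α : Fin (n+1) → ℝ | ∀ j, α j ∈ Set.Ico (0:ℝ) 1} := by
      rw [show {α : Fin (n+1) → ℝ | ∀ j, α j ∈ Set.Ico (0:ℝ) 1}
          = Set.pi Set.univ (fun _ => Set.Ico (0:ℝ) 1) by ext; simp [Set.mem_pi]]
      exact MeasurableSet.univ_pi fun _ => measurableSet_Ico
    have h2 : Measurable fun α : Fin (n+1) → ℝ => dnint (∑ j, (x j : ℝ) * α j) := by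
      apply measurable_dnint.comp
      exact Finset.measurable_sum _ fun j _ => (measurable_pi_apply j).const_mul _
    exact h1.inter (h2 measurableSet_Iic)
  set e := MeasurableEquiv.piFinSuccAbove (fun _ : Fin (n+1) => ℝ) i with he
  have hmp := measurePreserving_piFinSuccAbove (fun _ : Fin (n+1) => (volume : Measure ℝ)) i
  have hs : MeasurableSet (e.symm ⁻¹' A) := e.symm.measurable hmeasA
  have hApre : e ⁻¹' (e.symm ⁻¹' A) = A := by ext α; simp
  have hvol : volume A = ((volume : Measure ℝ).prod
      (Measure.pi fun _ : Fin n => (volume : Measure ℝ))) (e.symm ⁻¹' A) := by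
    have h := hmp.measure_preimage hs.nullMeasurableSet
    rw [hApre] at h
    rw [volume_pi]
    exact h
  rw [hvol, Measure.prod_apply_symm hs]
  have hslice : ∀ y : Fin n → ℝ,
      volume ((fun t : ℝ => (t, y)) ⁻¹' (e.symm ⁻¹' A)) ≤
        (Set.pi Set.univ (fun _ : Fin n => Set.Ico (0:ℝ) 1)).indicator
          (fun _ => ENNReal.ofReal (4 * ε)) y := by
    intro y
    have hes : ∀ t : ℝ, (e.symm (t, y) : Fin (n+1) → ℝ) = i.insertNth t y := fun t => rfl
    have hmem : ∀ t : ℝ, ((fun t : ℝ => (t, y)) ⁻¹' (e.symm ⁻¹' A)) t ↔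
        ((i.insertNth t y : Fin (n+1) → ℝ) ∈ A) := by
      intro t
      constructor
      · intro h; rw [← hes]; exact h
      · intro h; show e.symm (t, y) ∈ A; rw [hes]; exact h
    by_cases hy : y ∈ Set.pi Set.univ (fun _ : Fin n => Set.Ico (0:ℝ) 1)
    · rw [Set.indicator_of_mem hy]
      have hsub : ((fun t : ℝ => (t, y)) ⁻¹' (e.symm ⁻¹' A)) ⊆
          {t : ℝ | t ∈ Set.Ico (0:ℝ) 1 ∧
            dnint ((∑ j, (x (i.succAbove j) : ℝ) * y j) + (x i : ℤ) * t) ≤ ε} := by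
        intro t ht
        rw [Set.mem_preimage] at ht
        have ht' : (i.insertNth t y : Fin (n+1) → ℝ) ∈ A := (hmem t).mp ht
        rw [hA, Set.mem_setOf_eq] at ht'
        obtain ⟨hbox, hd⟩ := ht'
        have hti : (i.insertNth t y : Fin (n+1) → ℝ) i = t := Fin.insertNth_apply_same (α := fun _ => ℝ) i t y
        refine ⟨by rw [← hti]; exact hbox i, ?_⟩
        have hsum : ∑ j, (x j : ℝ) * (i.insertNth t y : Fin (n+1) → ℝ) j
            = (∑ j, (x (i.succAbove j) : ℝ) * y j) + (x i : ℝ) * t := by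
          rw [Fin.sum_univ_succAbove (fun j => (x j : ℝ) * (i.insertNth t y : Fin (n+1) → ℝ) j) i]
          simp only [Fin.insertNth_apply_same, Fin.insertNth_apply_succAbove]
          ring
        rw [hsum] at hd
        exact_mod_cast hd
      exact (measure_mono hsub).trans (oneD (x i) hx _ ε hε)
    · rw [Set.indicator_of_notMem hy]
      have hempty : ((fun t : ℝ => (t, y)) ⁻¹' (e.symm ⁻¹' A)) = ∅ := by
        rw [Set.eq_empty_iff_forall_notMem]
        intro t ht
        rw [Set.mem_preimage] at ht
        have ht' : (i.insertNth t y : Fin (n+1) → ℝ) ∈ A := (hmem t).mp ht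
        rw [hA, Set.mem_setOf_eq] at ht'
        apply hy
        intro j _
        have := ht'.1 (i.succAbove j)
        rwa [Fin.insertNth_apply_succAbove] at this
      rw [hempty, measure_empty]
  calc (∫⁻ y, volume ((fun t : ℝ => (t, y)) ⁻¹' (e.symm ⁻¹' A))
          ∂(Measure.pi fun _ : Fin n => (volume : Measure ℝ)))
      ≤ ∫⁻ y, (Set.pi Set.univ (fun _ : Fin n => Set.Ico (0:ℝ) 1)).indicator
          (fun _ => ENNReal.ofReal (4 * ε)) y
          ∂(Measure.pi fun _ : Fin n => (volume : Measure ℝ)) := lintegral_mono hslice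
    _ = ENNReal.ofReal (4 * ε) := by
        rw [lintegral_indicator (MeasurableSet.univ_pi fun _ => measurableSet_Ico)]
        rw [setLIntegral_const]
        rw [Measure.pi_pi]
        simp [Real.volume_Ico]

lemma count_bound (m h : ℕ) (hh : 1 ≤ h) :
    (((Fintype.piFinset fun _ : Fin (m+1) => Finset.Icc (-(h:ℤ)) h).filter
      (fun x => Hgt x = h)).card : ℝ) ≤ (2*(m+1) : ℝ) * (2*h+1)^m := by
  classical
  set G := (Fintype.piFinset fun _ : Fin (m+1) => Finset.Icc (-(h:ℤ)) h).filter
      (fun x => Hgt x = h) with hG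
  have hsub : G ⊆ Finset.biUnion Finset.univ (fun i : Fin (m+1) =>
      Finset.biUnion ({(h:ℤ), -(h:ℤ)} : Finset ℤ) (fun v =>
        Fintype.piFinset fun j => if j = i then ({v} : Finset ℤ) else Finset.Icc (-(h:ℤ)) h)) := by
    intro x hx
    rw [hG, Finset.mem_filter] at hx
    obtain ⟨hxbox, hxh⟩ := hx
    obtain ⟨i, -, hi⟩ := Finset.exists_mem_eq_sup Finset.univ Finset.univ_nonempty
      (fun i => (x i).natAbs)
    rw [Finset.mem_biUnion]
    refine ⟨i, Finset.mem_univ i, ?_⟩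
    rw [Finset.mem_biUnion]
    have hxi : (x i).natAbs = h := by rw [← hi]; exact hxh.symm ▸ rfl
    have hv : x i = (h:ℤ) ∨ x i = -(h:ℤ) := by
      rcases Int.natAbs_eq (x i) with he | he
      · left; rw [he, hxi]
      · right; rw [he, hxi]
    refine ⟨x i, by rcases hv with hv | hv <;> simp [hv], ?_⟩
    rw [Fintype.mem_piFinset]
    intro j
    by_cases hj : j = i
    · subst hj; simp
    · simp only [hj, if_false]
      exact Fintype.mem_piFinset.mp hxbox j
  have hcard : G.card ≤ (m+1) * (2 * ((2*h+1))^m) := by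
    calc G.card ≤ ∑ i : Fin (m+1), (Finset.biUnion ({(h:ℤ), -(h:ℤ)} : Finset ℤ) (fun v =>
        Fintype.piFinset fun j => if j = i then ({v} : Finset ℤ) else Finset.Icc (-(h:ℤ)) h)).card :=
        (Finset.card_le_card hsub).trans (Finset.card_biUnion_le)
      _ ≤ ∑ i : Fin (m+1), 2 * (2*h+1)^m := by
          apply Finset.sum_le_sum
          intro i _
          calc (Finset.biUnion ({(h:ℤ), -(h:ℤ)} : Finset ℤ) _).card
              ≤ ∑ v ∈ ({(h:ℤ), -(h:ℤ)} : Finset ℤ),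
                (Fintype.piFinset fun j =>
                  if j = i then ({v} : Finset ℤ) else Finset.Icc (-(h:ℤ)) h).card :=
                Finset.card_biUnion_le
            _ ≤ ∑ _v ∈ ({(h:ℤ), -(h:ℤ)} : Finset ℤ), (2*h+1)^m := by
                apply Finset.sum_le_sum
                intro v _
                rw [Fintype.card_piFinset]
                have : ∀ j : Fin (m+1), ((if j = i then ({v} : Finset ℤ)
                    else Finset.Icc (-(h:ℤ)) h)).card = if j = i then 1 else (2*h+1) := by
                  intro j
                  by_cases hj : j = i <;> simp [hj, Int.card_Icc]
                  omega
                rw [Finset.prod_congr rfl (fun j _ => this j)]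
                rw [← Finset.mul_prod_erase Finset.univ _ (Finset.mem_univ i)]
                rw [if_pos rfl, one_mul]
                rw [Finset.prod_congr rfl (fun j hj => if_neg (Finset.ne_of_mem_erase hj))]
                rw [Finset.prod_const, Finset.card_erase_of_mem (Finset.mem_univ i),
                  Finset.card_univ, Fintype.card_fin]
                simp
            _ ≤ 2 * (2*h+1)^m := by
                apply le_trans (Finset.sum_le_card_nsmul _ _ _ (fun _ _ => le_refl ((2*h+1)^m)))
                have : ({(h:ℤ), -(h:ℤ)} : Finset ℤ).card ≤ 2 := Finset.card_insert_le _ _ |>.trans (by simp)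
                calc _ ≤ 2 * (2*h+1)^m := by
                      rw [smul_eq_mul]
                      exact Nat.mul_le_mul_right _ this
                  _ = 2 * (2*h+1)^m := rfl
      _ = (m+1) * (2 * (2*h+1)^m) := by rw [Finset.sum_const, Finset.card_univ, Fintype.card_fin, smul_eq_mul]
  calc (G.card : ℝ) ≤ ((m+1) * (2 * (2*h+1)^m) : ℕ) := by exact_mod_cast hcard
    _ = (2*(m+1) : ℝ) * (2*h+1)^m := by push_cast; ring

lemma tsum_finite (m : ℕ) (ψ : ℕ → ℝ) (hpos : ∀ h, 0 < ψ h)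
    (hconv : Summable fun h : ℕ => (h : ℝ) ^ m * ψ h) :
    ∑' x : Fin (m+1) → ℤ,
      (if Hgt x = 0 then 0 else ENNReal.ofReal (4 * ψ (Hgt x))) ≠ ⊤ := by
  classical
  set F : ℕ → ℝ≥0∞ := fun h => if h = 0 then 0 else ENNReal.ofReal (4 * ψ h) with hF
  set G : ℕ → Finset (Fin (m+1) → ℤ) := fun h =>
    (Fintype.piFinset fun _ : Fin (m+1) => Finset.Icc (-(h:ℤ)) h).filter
      (fun x => Hgt x = h) with hGdef
  have hfib : ∀ h : ℕ, ∀ x : Fin (m+1) → ℤ, Hgt x = h ↔ x ∈ G h := by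
    intro h x
    constructor
    · intro hx
      rw [hGdef, Finset.mem_filter]
      refine ⟨?_, hx⟩
      rw [Fintype.mem_piFinset]
      intro j
      have hj : (x j).natAbs ≤ Hgt x :=
        Finset.le_sup (f := fun i => (x i).natAbs) (Finset.mem_univ j)
      rw [hx] at hj
      rw [Finset.mem_Icc]
      omega
    · intro hx
      rw [hGdef, Finset.mem_filter] at hx
      exact hx.2
  have h1 : ∑' x : Fin (m+1) → ℤ, F (Hgt x)
      = ∑' h : ℕ, ∑' x : {x : Fin (m+1) → ℤ // Hgt x = h}, F (Hgt x.1) := by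
    rw [← (Equiv.sigmaFiberEquiv (Hgt : (Fin (m+1) → ℤ) → ℕ)).tsum_eq
      (fun x => F (Hgt x))]
    exact ENNReal.tsum_sigma' _
  have h2 : ∀ h : ℕ, ∑' x : {x : Fin (m+1) → ℤ // Hgt x = h}, F (Hgt x.1)
      = (G h).card * F h := by
    intro h
    have : ∀ x : {x : Fin (m+1) → ℤ // Hgt x = h}, F (Hgt x.1) = F h := by
      intro x; rw [x.2]
    rw [tsum_congr this]
    rw [(Equiv.subtypeEquivRight (hfib h)).tsum_eq (fun _ => F h)]
    trans (∑ _x ∈ G h, F h)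
    · exact Finset.tsum_subtype' (G h) fun _ => F h
    · rw [Finset.sum_const, nsmul_eq_mul]
  set C : ℝ := 8 * (m+1) * 3^m with hC
  have hCpos : 0 < C := by positivity
  have h3 : ∀ h : ℕ, (G h).card * F h ≤ ENNReal.ofReal (C * ((h:ℝ)^m * ψ h)) := by
    intro h
    rcases Nat.eq_zero_or_pos h with h0 | h1
    · subst h0; simp [hF]
    · have hne : h ≠ 0 := by omega
      have hFh : F h = ENNReal.ofReal (4 * ψ h) := by rw [hF]; simp [hne]
      rw [hFh, ← ENNReal.ofReal_natCast, ← ENNReal.ofReal_mul (Nat.cast_nonneg _)]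
      apply ENNReal.ofReal_le_ofReal
      have hcb := count_bound m h h1
      have hψ := (hpos h).le
      have h31 : ((2*h+1 : ℝ))^m ≤ (3*h : ℝ)^m := by
        apply pow_le_pow_left₀ (by positivity)
        have : (1:ℝ) ≤ (h:ℝ) := by exact_mod_cast h1
        linarith
      have h3h : (3*(h:ℝ))^m = 3^m * (h:ℝ)^m := mul_pow 3 (h:ℝ) m
      calc ((G h).card : ℝ) * (4 * ψ h) ≤ ((2*(m+1) : ℝ) * (2*h+1)^m) * (4 * ψ h) := by
            apply mul_le_mul_of_nonneg_right _ (by positivity)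
            exact_mod_cast hcb
        _ ≤ ((2*(m+1) : ℝ) * (3^m * (h:ℝ)^m)) * (4 * ψ h) := by
            apply mul_le_mul_of_nonneg_right _ (by positivity)
            apply mul_le_mul_of_nonneg_left _ (by positivity)
            rw [← h3h]; exact h31
        _ = C * ((h:ℝ)^m * ψ h) := by rw [hC]; push_cast; ring
  have h4 : ∑' x : Fin (m+1) → ℤ, F (Hgt x)
      ≤ ∑' h : ℕ, ENNReal.ofReal (C * ((h:ℝ)^m * ψ h)) := by
    rw [h1]
    rw [tsum_congr h2]
    exact ENNReal.tsum_le_tsum h3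
  have h5 : ∑' h : ℕ, ENNReal.ofReal (C * ((h:ℝ)^m * ψ h))
      = ENNReal.ofReal (∑' h : ℕ, C * ((h:ℝ)^m * ψ h)) := by
    refine (ENNReal.ofReal_tsum_of_nonneg (fun h => ?_) (hconv.mul_left C)).symm
    have := (hpos h).le
    positivity
  have : ∑' x : Fin (m+1) → ℤ, F (Hgt x) ≠ ⊤ := by
    rw [hF] at *
    refine ne_top_of_le_ne_top ?_ h4
    rw [h5]
    exact ENNReal.ofReal_ne_top
  simpa [hF] using this

theorem khintchine_groshev_restricted_convergence (n ℓ : ℕ) (hℓ : 1 ≤ ℓ) (hn : ℓ ≤ n)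
    (ψ : ℕ → ℝ) (hpos : ∀ h, 0 < ψ h) (hmono : Antitone ψ)
    (hconv : Summable fun h : ℕ => (h : ℝ) ^ (n - 1) * ψ h) :
    volume {α : Fin n → ℝ | {x : Fin n → ℤ | cone ℓ x ∧
      dnint (∑ i, (x i : ℝ) * α i) ≤ ψ (Hgt x)}.Infinite} = 0 := by
  classical
  obtain ⟨m, rfl⟩ : ∃ m, n = m + 1 := ⟨n - 1, by omega⟩
  have hconv' : Summable fun h : ℕ => (h : ℝ) ^ m * ψ h := by simpa using hconv
  set S := {α : Fin (m+1) → ℝ | {x : Fin (m+1) → ℤ | cone ℓ x ∧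
      dnint (∑ i, (x i : ℝ) * α i) ≤ ψ (Hgt x)}.Infinite} with hS
  have hdtr : ∀ (v : Fin (m+1) → ℤ) (α : Fin (m+1) → ℝ) (x : Fin (m+1) → ℤ),
      dnint (∑ i, (x i : ℝ) * ((v i : ℝ) + α i)) = dnint (∑ i, (x i : ℝ) * α i) := by
    intro v α x
    have : ∑ i, (x i : ℝ) * ((v i : ℝ) + α i)
        = (∑ i, (x i : ℝ) * α i) + ((∑ i, x i * v i : ℤ) : ℝ) := by
      push_cast; rw [← Finset.sum_add_distrib]; apply Finset.sum_congr rfl; intros; ring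
    rw [this, dnint_add_int]
  have hinv : ∀ (v : Fin (m+1) → ℤ) (α : Fin (m+1) → ℝ),
      ((fun j => (v j : ℝ) + α j) ∈ S) ↔ α ∈ S := by
    intro v α
    rw [hS, Set.mem_setOf_eq, Set.mem_setOf_eq]
    have heq : {x : Fin (m+1) → ℤ | cone ℓ x ∧
        dnint (∑ i, (x i : ℝ) * ((fun j => (v j : ℝ) + α j) i)) ≤ ψ (Hgt x)}
        = {x : Fin (m+1) → ℤ | cone ℓ x ∧
        dnint (∑ i, (x i : ℝ) * α i) ≤ ψ (Hgt x)} := by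
      ext x
      simp only [Set.mem_setOf_eq]
      rw [show (∑ i, (x i : ℝ) * ((fun j => (v j : ℝ) + α j) i))
        = ∑ i, (x i : ℝ) * ((v i : ℝ) + α i) from rfl, hdtr v α x]
    rw [heq]
  have hcone1 : ∀ x : Fin (m+1) → ℤ, cone ℓ x → 1 ≤ Hgt x := by
    intro x hc
    unfold cone at hc
    calc 1 ≤ (Finset.univ.filter fun i : Fin (m+1) => (i:ℕ) < ℓ).sup
          fun i => (x i).natAbs := by omega
      _ ≤ Hgt x := Finset.sup_mono (Finset.filter_subset _ _)
  set F : ℕ → ℝ≥0∞ := fun h => if h = 0 then 0 else ENNReal.ofReal (4 * ψ h) with hF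
  set B : (Fin (m+1) → ℤ) → Set (Fin (m+1) → ℝ) := fun x =>
    if cone ℓ x then {α | (∀ j, α j ∈ Set.Ico (0:ℝ) 1)
      ∧ dnint (∑ j, (x j:ℝ) * α j) ≤ ψ (Hgt x)} else ∅ with hB
  have hBle : ∀ x, volume (B x) ≤ F (Hgt x) := by
    intro x
    by_cases hc : cone ℓ x
    · have h1 : 1 ≤ Hgt x := hcone1 x hc
      have hne : Hgt x ≠ 0 := by omega
      obtain ⟨i, -, hi⟩ := Finset.exists_mem_eq_sup (Finset.univ : Finset (Fin (m+1)))
        Finset.univ_nonempty (fun i => (x i).natAbs)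
      have hxi : x i ≠ 0 := by
        intro h0
        have : Hgt x = (x i).natAbs := hi
        rw [h0] at this
        simp at this
        omega
      have hsl := slice_bound x i hxi (ψ (Hgt x)) (hpos _).le
      rw [hB]
      simp only [if_pos hc]
      rw [hF]
      simp only [hne, if_false]
      simpa using hsl
    · rw [hB]
      simp [if_neg hc, hF]
  have htsum : ∑' x, volume (B x) ≠ ⊤ := by
    refine ne_top_of_le_ne_top ?_ (ENNReal.tsum_le_tsum hBle)
    rw [hF]
    exact tsum_finite m ψ hpos hconv'
  have hBC : volume (limsup B cofinite) = 0 := measure_limsup_cofinite_eq_zero htsum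
  have hbox : ∀ α ∈ S, (∀ j, α j ∈ Set.Ico (0:ℝ) 1) → α ∈ limsup B cofinite := by
    intro α hα hb
    rw [mem_limsup_iff_frequently_mem, frequently_cofinite_iff_infinite]
    refine Set.Infinite.mono ?_ hα
    intro x hx
    rw [Set.mem_setOf_eq, hB]
    simp only [if_pos hx.1]
    exact ⟨hb, hx.2⟩
  have hS0 : volume (S ∩ {α | ∀ j, α j ∈ Set.Ico (0:ℝ) 1}) = 0 :=
    measure_mono_null (fun α hα => hbox α hα.1 hα.2) hBC
  have hSv : ∀ v : Fin (m+1) → ℤ,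
      volume (S ∩ {α | ∀ j, α j - (v j : ℝ) ∈ Set.Ico (0:ℝ) 1}) = 0 := by
    intro v
    have hpre := measure_preimage_add (volume : Measure (Fin (m+1) → ℝ))
      (fun j => (v j : ℝ)) (S ∩ {α | ∀ j, α j - (v j : ℝ) ∈ Set.Ico (0:ℝ) 1})
    rw [← hpre]
    have heq : (fun α : Fin (m+1) → ℝ => (fun j => (v j:ℝ)) + α) ⁻¹'
        (S ∩ {α | ∀ j, α j - (v j : ℝ) ∈ Set.Ico (0:ℝ) 1})
        = S ∩ {α | ∀ j, α j ∈ Set.Ico (0:ℝ) 1} := by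
      ext α
      simp only [Set.mem_preimage, Set.mem_inter_iff, Set.mem_setOf_eq, Pi.add_apply,
        add_sub_cancel_left]
      constructor
      · rintro ⟨h1, h2⟩
        exact ⟨(hinv v α).mp h1, h2⟩
      · rintro ⟨h1, h2⟩
        exact ⟨(hinv v α).mpr h1, h2⟩
    rw [heq]
    exact hS0
  have hcover : S ⊆ ⋃ v : Fin (m+1) → ℤ,
      (S ∩ {α | ∀ j, α j - (v j : ℝ) ∈ Set.Ico (0:ℝ) 1}) := by
    intro α hα
    refine Set.mem_iUnion.mpr ⟨fun j => ⌊α j⌋, hα, fun j => ?_⟩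
    constructor
    · linarith [Int.floor_le (α j)]
    · linarith [Int.lt_floor_add_one (α j)]
  exact measure_mono_null hcover (measure_iUnion_null fun v => hSv v)
end

section
/- If x, x' ∈ ℤⁿ are linearly independent over ℚ, then for any non-increasing ψ : ℤ_{≥0} → ℝ_{>0} with values ≤ 1/2, the sets B(x) and B(x') are independent with respect to Lebesgue measure on [0,1]ⁿ: |B(x) ∩ B(x')| = |B(x)|·|B(x')|. -/
open Finset MeasureTheory

section Aux

open Set

attribute [local instance] ZeroLEOneClass.factZeroLtOne

lemma dnint_eq_norm' (r : ℝ) : dnint r = ‖(r : AddCircle (1:ℝ))‖ := by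
  rw [AddCircle.norm_eq]
  simp [dnint]

lemma exists_minor' {n : ℕ} {x x' : Fin n → ℤ}
    (hind : LinearIndependent ℚ ![fun i => (x i : ℚ), fun i => (x' i : ℚ)]) :
    ∃ i j : Fin n, x i * x' j - x j * x' i ≠ 0 := by
  by_contra hcon
  push_neg at hcon
  rw [LinearIndependent.pair_iff] at hind
  rcases eq_or_ne x 0 with hx | hx
  · have h := (hind 1 0 (by funext j; simp [hx])).1
    exact one_ne_zero h
  · obtain ⟨i, hi⟩ := Function.ne_iff.mp hx
    have h := (hind (x' i) (-(x i)) ?_).2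
    · rw [neg_eq_zero] at h
      exact hi (by exact_mod_cast h)
    · funext j
      have hq : (x i : ℚ) * x' j = x j * x' i := by
        exact_mod_cast sub_eq_zero.mp (hcon i j)
      simp only [Pi.add_apply, Pi.smul_apply, smul_eq_mul, Pi.zero_apply, Pi.neg_apply]
      linarith [hq]

lemma coe_sum_circle' {n : ℕ} (g : Fin n → ℝ) :
    ((∑ i, g i : ℝ) : AddCircle (1:ℝ)) = ∑ i, ((g i : ℝ) : AddCircle (1:ℝ)) :=
  map_sum (QuotientAddGroup.mk' (AddSubgroup.zmultiples (1:ℝ))) g univ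

lemma coe_zsmul_circle' (c : ℤ) (r : ℝ) :
    (((c : ℝ) * r : ℝ) : AddCircle (1:ℝ)) = c • ((r : ℝ) : AddCircle (1:ℝ)) := by
  rw [← zsmul_eq_mul]
  exact map_zsmul (QuotientAddGroup.mk' (AddSubgroup.zmultiples (1:ℝ))) c r

lemma pi_restrict_eq' (n : ℕ) :
    (Measure.pi fun _ : Fin n => volume.restrict (Ioc (0:ℝ) 1)) =
      volume.restrict (Set.univ.pi fun _ : Fin n => Ioc (0:ℝ) 1) := by
  refine Measure.pi_eq fun s hs => ?_
  rw [Measure.restrict_apply (MeasurableSet.univ_pi hs), ← Set.pi_inter_distrib,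
    volume_pi_pi]
  simp_rw [Measure.restrict_apply (hs _)]

lemma map_F_eq' {n : ℕ} (x x' : Fin n → ℤ)
    (hd : ∃ i j : Fin n, x i * x' j - x j * x' i ≠ 0) :
    Measure.map (fun α : Fin n → ℝ =>
        (((∑ i, (x i : ℝ) * α i : ℝ) : AddCircle (1:ℝ)),
         ((∑ i, (x' i : ℝ) * α i : ℝ) : AddCircle (1:ℝ))))
      (Measure.pi fun _ : Fin n => volume.restrict (Ioc (0:ℝ) 1)) =
      (volume : Measure (AddCircle (1:ℝ) × AddCircle (1:ℝ))) := by
  obtain ⟨i, j, hij⟩ := hd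
  have hne : i ≠ j := by
    rintro rfl
    exact hij (by ring)
  have hq : MeasurePreserving (fun (α : Fin n → ℝ) (i : Fin n) => ((α i : ℝ) : AddCircle (1:ℝ)))
      (Measure.pi fun _ : Fin n => volume.restrict (Ioc (0:ℝ) 1))
      (volume : Measure (Fin n → AddCircle (1:ℝ))) := by
    rw [volume_pi]
    exact measurePreserving_pi _ _ fun _ => by
      simpa using AddCircle.measurePreserving_mk 1 0
  set L : (Fin n → AddCircle (1:ℝ)) →+ AddCircle (1:ℝ) × AddCircle (1:ℝ) :=
    { toFun := fun t => (∑ i, x i • t i, ∑ i, x' i • t i)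
      map_zero' := by simp
      map_add' := by
        intro s t
        simp [Prod.ext_iff, smul_add, Finset.sum_add_distrib] } with hLdef
  have hLapp : ∀ t, L t = (∑ i, x i • t i, ∑ i, x' i • t i) := fun _ => rfl
  have hcont : Continuous L := by
    apply Continuous.prodMk <;>
      exact continuous_finset_sum _ fun k _ => (continuous_zsmul _).comp (continuous_apply k)
  have hsum : ∀ (f : Fin n → ℤ) (a b : ℝ),
      ∑ k, (f k : ℝ) * ((Pi.single i a : Fin n → ℝ) k + (Pi.single j b : Fin n → ℝ) k)
        = f i * a + f j * b := by
    intro f a b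
    simp only [mul_add, Finset.sum_add_distrib]
    congr 1
    · rw [Finset.sum_eq_single i]
      · simp
      · intro k _ hk; simp [Pi.single_eq_of_ne hk]
      · simp
    · rw [Finset.sum_eq_single j]
      · simp
      · intro k _ hk; simp [Pi.single_eq_of_ne hk]
      · simp
  have hcomm : ∀ (f : Fin n → ℤ) (α : Fin n → ℝ),
      (∑ k, f k • ((α k : ℝ) : AddCircle (1:ℝ))) = ((∑ k, (f k : ℝ) * α k : ℝ) : AddCircle (1:ℝ)) := by
    intro f α
    rw [coe_sum_circle']
    exact Finset.sum_congr rfl fun k _ => (coe_zsmul_circle' (f k) (α k)).symm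
  have hdR : ((x i : ℝ) * x' j - x j * x' i) ≠ 0 := by
    exact_mod_cast hij
  have hsurj : Function.Surjective L := by
    rintro ⟨u, v⟩
    obtain ⟨s, rfl⟩ := QuotientAddGroup.mk'_surjective _ u
    obtain ⟨t, rfl⟩ := QuotientAddGroup.mk'_surjective _ v
    set a : ℝ := (s * (x' j : ℝ) - t * (x j : ℝ)) / ((x i : ℝ) * x' j - x j * x' i)
    set b : ℝ := ((x i : ℝ) * t - (x' i : ℝ) * s) / ((x i : ℝ) * x' j - x j * x' i)
    refine ⟨fun k => (((Pi.single i a : Fin n → ℝ) k + (Pi.single j b : Fin n → ℝ) k : ℝ) :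
      AddCircle (1:ℝ)), ?_⟩
    rw [hLapp]
    have h1 : (x i : ℝ) * a + (x j : ℝ) * b = s := by
      simp only [a, b]
      rw [mul_div_assoc', mul_div_assoc', ← add_div, div_eq_iff hdR]
      ring
    have h2 : (x' i : ℝ) * a + (x' j : ℝ) * b = t := by
      simp only [a, b]
      rw [mul_div_assoc', mul_div_assoc', ← add_div, div_eq_iff hdR]
      ring
    refine Prod.ext ?_ ?_ <;> simp only []
    · rw [hcomm, hsum, h1]; rfl
    · rw [hcomm, hsum, h2]; rfl
  have hFeq : (fun α : Fin n → ℝ =>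
        (((∑ i, (x i : ℝ) * α i : ℝ) : AddCircle (1:ℝ)),
         ((∑ i, (x' i : ℝ) * α i : ℝ) : AddCircle (1:ℝ))))
      = L ∘ (fun (α : Fin n → ℝ) (i : Fin n) => ((α i : ℝ) : AddCircle (1:ℝ))) := by
    funext α
    simp only [Function.comp_apply, hLapp, hcomm]
  rw [hFeq, ← Measure.map_map hcont.measurable hq.measurable, hq.map_eq]
  haveI : IsProbabilityMeasure (volume : Measure (Fin n → AddCircle (1:ℝ))) := by
    constructor
    rw [volume_pi, Measure.pi_univ]
    simp [AddCircle.measure_univ]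
  haveI : IsProbabilityMeasure ((volume : Measure (Fin n → AddCircle (1:ℝ))).map L) :=
    Measure.isProbabilityMeasure_map hcont.measurable.aemeasurable
  haveI : Measure.IsAddHaarMeasure ((volume : Measure (Fin n → AddCircle (1:ℝ))).map L) :=
    Measure.isAddHaarMeasure_map_of_isFiniteMeasure _ L hcont hsurj
  haveI : IsProbabilityMeasure (volume : Measure (AddCircle (1:ℝ) × AddCircle (1:ℝ))) := by
    constructor
    rw [Measure.volume_eq_prod, ← Set.univ_prod_univ, Measure.prod_prod]
    simp [AddCircle.measure_univ]
  haveI : (volume : Measure (AddCircle (1:ℝ) × AddCircle (1:ℝ))).IsAddHaarMeasure := by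
    rw [Measure.volume_eq_prod]; infer_instance
  exact Measure.isAddHaarMeasure_eq_of_isProbabilityMeasure _ _

lemma key_measure' {n : ℕ} (x x' : Fin n → ℤ)
    (hd : ∃ i j : Fin n, x i * x' j - x j * x' i ≠ 0)
    (A B : Set (AddCircle (1:ℝ))) (hA : MeasurableSet A) (hB : MeasurableSet B) :
    volume (Set.Icc (0 : Fin n → ℝ) 1 ∩
        (fun α : Fin n → ℝ =>
          (((∑ i, (x i : ℝ) * α i : ℝ) : AddCircle (1:ℝ)),
           ((∑ i, (x' i : ℝ) * α i : ℝ) : AddCircle (1:ℝ)))) ⁻¹' (A ×ˢ B)) =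
      volume A * volume B := by
  set F : (Fin n → ℝ) → AddCircle (1:ℝ) × AddCircle (1:ℝ) := fun α =>
    (((∑ i, (x i : ℝ) * α i : ℝ) : AddCircle (1:ℝ)),
     ((∑ i, (x' i : ℝ) * α i : ℝ) : AddCircle (1:ℝ))) with hF
  have hmsum : ∀ (f : Fin n → ℤ), Measurable fun α : Fin n → ℝ => ∑ i, (f i : ℝ) * α i :=
    fun f => Finset.measurable_sum _ fun i _ => (measurable_pi_apply i).const_mul _
  have hFmeas : Measurable F :=
    ((AddCircle.measurable_mk').comp (hmsum x)).prodMk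
      ((AddCircle.measurable_mk').comp (hmsum x'))
  have hS : MeasurableSet (F ⁻¹' (A ×ˢ B)) := hFmeas (hA.prod hB)
  set Q : Set (Fin n → ℝ) := Set.univ.pi fun _ : Fin n => Ioc (0:ℝ) 1 with hQ
  have hsub : Q ⊆ Set.Icc (0 : Fin n → ℝ) 1 := by
    intro α hα
    exact ⟨fun i => le_of_lt (hα i trivial).1, fun i => (hα i trivial).2⟩
  have hIcc1 : volume (Set.Icc (0 : Fin n → ℝ) 1) = 1 := by
    rw [← Set.pi_univ_Icc, volume_pi_pi]
    simp [Real.volume_Icc]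
  have hQ1 : volume Q = 1 := by
    rw [hQ, volume_pi_pi]
    simp [Real.volume_Ioc]
  have hQmeas : MeasurableSet Q := MeasurableSet.univ_pi fun _ => measurableSet_Ioc
  have hnull : volume (Set.Icc (0 : Fin n → ℝ) 1 \ Q) = 0 := by
    rw [measure_diff hsub hQmeas.nullMeasurableSet (by rw [hQ1]; exact ENNReal.one_ne_top),
      hIcc1, hQ1, tsub_self]
  have hswap : volume (Set.Icc (0 : Fin n → ℝ) 1 ∩ F ⁻¹' (A ×ˢ B)) =
      volume (Q ∩ F ⁻¹' (A ×ˢ B)) := by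
    apply le_antisymm
    · calc volume (Set.Icc (0 : Fin n → ℝ) 1 ∩ F ⁻¹' (A ×ˢ B))
          ≤ volume ((Q ∩ F ⁻¹' (A ×ˢ B)) ∪ (Set.Icc (0 : Fin n → ℝ) 1 \ Q)) := by
            apply measure_mono
            intro α hα
            by_cases h : α ∈ Q
            · exact Or.inl ⟨h, hα.2⟩
            · exact Or.inr ⟨hα.1, h⟩
      _ ≤ volume (Q ∩ F ⁻¹' (A ×ˢ B)) + volume (Set.Icc (0 : Fin n → ℝ) 1 \ Q) :=
            measure_union_le _ _
      _ = volume (Q ∩ F ⁻¹' (A ×ˢ B)) := by rw [hnull, add_zero]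
    · exact measure_mono (Set.inter_subset_inter_left _ hsub)
  rw [hswap, Set.inter_comm, ← Measure.restrict_apply hS, ← pi_restrict_eq',
    ← Measure.map_apply hFmeas (hA.prod hB), map_F_eq' x x' hd,
    Measure.volume_eq_prod, Measure.prod_prod]

end Aux

theorem measure_B_inter_independent (n : ℕ) (ψ : ℕ → ℝ)
    (hpos : ∀ h, 0 < ψ h) (hhalf : ∀ h, ψ h ≤ 1 / 2) (hmono : Antitone ψ)
    (x x' : Fin n → ℤ)
    (hind : LinearIndependent ℚ ![fun i => (x i : ℚ), fun i => (x' i : ℚ)]) :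
    volume ({α : Fin n → ℝ | α ∈ Set.Icc (0 : Fin n → ℝ) 1 ∧
        dnint (∑ i, (x i : ℝ) * α i) ≤ ψ (Hgt x)} ∩
      {α : Fin n → ℝ | α ∈ Set.Icc (0 : Fin n → ℝ) 1 ∧
        dnint (∑ i, (x' i : ℝ) * α i) ≤ ψ (Hgt x')}) =
    volume {α : Fin n → ℝ | α ∈ Set.Icc (0 : Fin n → ℝ) 1 ∧
        dnint (∑ i, (x i : ℝ) * α i) ≤ ψ (Hgt x)} *
    volume {α : Fin n → ℝ | α ∈ Set.Icc (0 : Fin n → ℝ) 1 ∧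
        dnint (∑ i, (x' i : ℝ) * α i) ≤ ψ (Hgt x')} := by
  have fact1 : Fact ((0:ℝ) < 1) := ⟨one_pos⟩
  have hd := exists_minor' hind
  set A : Set (AddCircle (1:ℝ)) := {u | ‖u‖ ≤ ψ (Hgt x)} with hAdef
  set B : Set (AddCircle (1:ℝ)) := {u | ‖u‖ ≤ ψ (Hgt x')} with hBdef
  have hA : MeasurableSet A := (isClosed_le continuous_norm continuous_const).measurableSet
  have hB : MeasurableSet B := (isClosed_le continuous_norm continuous_const).measurableSet
  set F : (Fin n → ℝ) → AddCircle (1:ℝ) × AddCircle (1:ℝ) := fun α =>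
    (((∑ i, (x i : ℝ) * α i : ℝ) : AddCircle (1:ℝ)),
     ((∑ i, (x' i : ℝ) * α i : ℝ) : AddCircle (1:ℝ))) with hF
  have huniv : volume (Set.univ : Set (AddCircle (1:ℝ))) = 1 := by
    simp [AddCircle.measure_univ]
  have hset1 : {α : Fin n → ℝ | α ∈ Set.Icc (0 : Fin n → ℝ) 1 ∧
      dnint (∑ i, (x i : ℝ) * α i) ≤ ψ (Hgt x)} =
      Set.Icc (0 : Fin n → ℝ) 1 ∩ F ⁻¹' (A ×ˢ Set.univ) := by
    ext α
    simp [hF, hAdef, Set.mem_prod, dnint_eq_norm']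
  have hset2 : {α : Fin n → ℝ | α ∈ Set.Icc (0 : Fin n → ℝ) 1 ∧
      dnint (∑ i, (x' i : ℝ) * α i) ≤ ψ (Hgt x')} =
      Set.Icc (0 : Fin n → ℝ) 1 ∩ F ⁻¹' (Set.univ ×ˢ B) := by
    ext α
    simp [hF, hBdef, Set.mem_prod, dnint_eq_norm']
  have hsets : {α : Fin n → ℝ | α ∈ Set.Icc (0 : Fin n → ℝ) 1 ∧
        dnint (∑ i, (x i : ℝ) * α i) ≤ ψ (Hgt x)} ∩
      {α : Fin n → ℝ | α ∈ Set.Icc (0 : Fin n → ℝ) 1 ∧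
        dnint (∑ i, (x' i : ℝ) * α i) ≤ ψ (Hgt x')} =
      Set.Icc (0 : Fin n → ℝ) 1 ∩ F ⁻¹' (A ×ˢ B) := by
    rw [hset1, hset2]
    ext α
    simp only [Set.mem_inter_iff, Set.mem_preimage, Set.mem_prod, Set.mem_univ, and_true,
      true_and]
    tauto
  rw [hsets, hset1, hset2, key_measure' x x' hd A B hA hB,
    key_measure' x x' hd A Set.univ hA MeasurableSet.univ,
    key_measure' x x' hd Set.univ B MeasurableSet.univ hB, huniv, mul_one, one_mul]
end

section
/- Let ψ : ℤ_{≥0} → ℝ_{>0} be non-increasing, and let f be a dimension function such that r ↦ r^{-n} f(r) is increasing and g(r) = r^{-(n-1)} f(r) is also a dimension function. If ∑_{r=1}^∞ rⁿ g(ψ(r)/r) < ∞, then the Hausdorff f-measure of ℒ_{n,ℓ}(ψ) is zero. -/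
open Finset MeasureTheory ENNReal

section Aux

lemma natAbs_le_Hgt {n : ℕ} (x : Fin n → ℤ) (i : Fin n) : (x i).natAbs ≤ Hgt x :=
  Finset.le_sup (f := fun i => (x i).natAbs) (Finset.mem_univ i)

lemma abs_cast_le_Hgt {n : ℕ} (x : Fin n → ℤ) (i : Fin n) : |(x i : ℝ)| ≤ (Hgt x : ℝ) := by
  have h := natAbs_le_Hgt x i
  have : |(x i : ℝ)| = ((x i).natAbs : ℝ) := by
    rw [← Int.cast_abs, Int.abs_eq_natAbs, Int.cast_natCast]
  rw [this]; exact_mod_cast h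

lemma cone_exists {n ℓ : ℕ} (hℓ : 1 ≤ ℓ) (hn : ℓ ≤ n) {x : Fin n → ℤ} (hx : cone ℓ x) :
    (∃ i : Fin n, (i : ℕ) < ℓ ∧ (x i).natAbs = Hgt x) ∧ 1 ≤ Hgt x := by
  have hn0 : 0 < n := lt_of_lt_of_le hℓ hn
  set g : Fin n → ℕ := fun i => (x i).natAbs with hg
  set s : Finset (Fin n) := Finset.univ.filter (fun i : Fin n => (i : ℕ) < ℓ) with hs
  have hsne : s.Nonempty := ⟨⟨0, hn0⟩, by simp [hs]; exact hℓ⟩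
  have hsplit : Hgt x = s.sup g ⊔ ((Finset.univ.filter fun i : Fin n => ℓ ≤ (i : ℕ)).sup g) := by
    classical
    have h1 : (Finset.univ.filter fun i : Fin n => ℓ ≤ (i : ℕ)) =
        Finset.univ.filter (fun i : Fin n => ¬ ((i : ℕ) < ℓ)) := by
      apply Finset.filter_congr; intro i _; simp [not_lt]
    have h2 : Hgt x = (s ∪ Finset.univ.filter (fun i : Fin n => ¬ ((i : ℕ) < ℓ))).sup g := by
      rw [hs, Finset.filter_union_filter_not_eq]; rfl
    rw [h2, Finset.sup_union, h1]
  have hsup : Hgt x = s.sup g := by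
    rw [hsplit, sup_eq_left.2 (le_of_lt hx)]
  obtain ⟨i, hi, hie⟩ := Finset.exists_mem_eq_sup s hsne g
  have hiℓ : (i : ℕ) < ℓ := by simpa [hs] using hi
  refine ⟨⟨i, hiℓ, by show g i = Hgt x; rw [← hie, ← hsup]⟩, ?_⟩
  have : (Finset.univ.filter fun i : Fin n => ℓ ≤ (i : ℕ)).sup g < Hgt x := by
    rw [hsup]; exact hx
  omega

open Classical in
noncomputable def iidx (n ℓ : ℕ) (x : Fin n → ℤ) : ℕ :=
  if h : ∃ i : Fin n, (i : ℕ) < ℓ ∧ (x i).natAbs = Hgt x then (h.choose : ℕ) else 0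

lemma iidx_spec {n ℓ : ℕ} (hℓ : 1 ≤ ℓ) (hn : ℓ ≤ n) {x : Fin n → ℤ} (hx : cone ℓ x) :
    ∃ i : Fin n, (i : ℕ) = iidx n ℓ x ∧ (i : ℕ) < ℓ ∧ (x i).natAbs = Hgt x := by
  classical
  have hex := (cone_exists hℓ hn hx).1
  refine ⟨hex.choose, ?_, hex.choose_spec⟩
  rw [iidx, dif_pos hex]

lemma one_le_Hgt {n ℓ : ℕ} (hℓ : 1 ≤ ℓ) (hn : ℓ ≤ n) {x : Fin n → ℤ} (hx : cone ℓ x) :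
    1 ≤ Hgt x := (cone_exists hℓ hn hx).2

lemma finite_Hgt_lt (n N : ℕ) : {x : Fin n → ℤ | Hgt x < N}.Finite := by
  classical
  apply Set.Finite.subset
    (Finset.finite_toSet (Fintype.piFinset fun _ : Fin n => Finset.Icc (-(N : ℤ)) (N : ℤ)))
  intro x hx
  simp only [Finset.coe_sort_coe, Finset.mem_coe, Fintype.mem_piFinset, Finset.mem_Icc]
  intro i
  have h1 : (x i).natAbs < N := lt_of_le_of_lt (natAbs_le_Hgt x i) hx
  omega

lemma nat_pow_sub_pow (a b k : ℕ) (hba : b ≤ a) :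
    a ^ (k + 1) ≤ b ^ (k + 1) + (k + 1) * (a - b) * a ^ k := by
  induction k with
  | zero => simpa using by omega
  | succ k ih =>
    have hpow : b ^ (k + 1) ≤ a ^ (k + 1) := Nat.pow_le_pow_left hba _
    calc a ^ (k + 2) = a * a ^ (k + 1) := by ring
    _ ≤ a * (b ^ (k + 1) + (k + 1) * (a - b) * a ^ k) := Nat.mul_le_mul_left a ih
    _ = a * b ^ (k + 1) + (k + 1) * (a - b) * a ^ (k+1) := by ring
    _ = b * b ^ (k + 1) + (a - b) * b ^ (k + 1) + (k + 1) * (a - b) * a ^ (k+1) := by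
        have : a * b ^ (k+1) = b * b ^ (k + 1) + (a - b) * b ^ (k + 1) := by
          rw [← Nat.add_mul]; rw [Nat.add_sub_cancel' hba]
        rw [this]
    _ ≤ b ^ (k + 2) + (a - b) * a ^ (k + 1) + (k + 1) * (a - b) * a ^ (k+1) := by
        have := Nat.mul_le_mul_left (a - b) hpow
        have hb : b * b ^ (k+1) = b ^ (k+2) := by ring
        omega
    _ = b ^ (k + 2) + (k + 2) * (a - b) * a ^ (k + 1) := by ring

end Aux
section Cover

/-- side length of covering cubes at height `h` -/
noncomputable def delta (ψ : ℕ → ℝ) (h : ℕ) : ℝ := ψ h / h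

noncomputable def corner (n ℓ : ℕ) (ψ : ℕ → ℝ) (x : Fin n → ℤ) (m : ℤ) (j : Fin n → ℤ)
    (i : Fin n) : ℝ :=
  (if (i : ℕ) = iidx n ℓ x then
      ((m : ℝ) - ∑ i' ∈ Finset.univ.filter (fun i' => i' ≠ i),
        (x i' : ℝ) * ((j i' : ℝ) * delta ψ (Hgt x))) / (x i : ℝ)
    else 0) + (j i : ℝ) * delta ψ (Hgt x)

noncomputable def cubeSet (n ℓ : ℕ) (ψ : ℕ → ℝ) (x : Fin n → ℤ) (m : ℤ) (j : Fin n → ℤ) :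
    Set (Fin n → ℝ) :=
  Set.univ.pi fun i =>
    Set.Icc (corner n ℓ ψ x m j i) (corner n ℓ ψ x m j i + delta ψ (Hgt x))

def covCond (n ℓ : ℕ) (ψ : ℕ → ℝ) (R N : ℕ) (x : Fin n → ℤ) (m : ℤ) (j : Fin n → ℤ) : Prop :=
  cone ℓ x ∧ N ≤ Hgt x ∧ |m| ≤ (n : ℤ) * (Hgt x) * R + ⌈ψ 0⌉ ∧
    (∀ i : Fin n, (i : ℕ) = iidx n ℓ x → |j i| ≤ (n : ℤ) + 2) ∧
    (∀ i : Fin n, (i : ℕ) ≠ iidx n ℓ x → |j i| ≤ ⌈(R : ℝ) / delta ψ (Hgt x)⌉ + 1)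

open Classical in
noncomputable def cov (n ℓ : ℕ) (ψ : ℕ → ℝ) (R N : ℕ)
    (p : (Fin n → ℤ) × ℤ × (Fin n → ℤ)) : Set (Fin n → ℝ) :=
  if covCond n ℓ ψ R N p.1 p.2.1 p.2.2 then cubeSet n ℓ ψ p.1 p.2.1 p.2.2 else ∅

lemma diam_cubeSet_le (n ℓ : ℕ) (ψ : ℕ → ℝ) (x : Fin n → ℤ) (m : ℤ) (j : Fin n → ℤ) :
    EMetric.diam (cubeSet n ℓ ψ x m j) ≤ ENNReal.ofReal (delta ψ (Hgt x)) := by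
  apply EMetric.diam_le
  intro p hp q hq
  rw [edist_pi_def]
  refine Finset.sup_le fun i _ => ?_
  rw [edist_dist]
  apply ENNReal.ofReal_le_ofReal
  have h1 := hp i (Set.mem_univ i)
  have h2 := hq i (Set.mem_univ i)
  have := Real.dist_le_of_mem_Icc h1 h2
  simpa using this

end Cover
section MemCov

lemma mem_cov {n ℓ : ℕ} (hℓ : 1 ≤ ℓ) (hn : ℓ ≤ n) {ψ : ℕ → ℝ} (hpos : ∀ h, 0 < ψ h)
    (hmono : Antitone ψ) (R N : ℕ)
    {x : Fin n → ℤ} (hx : cone ℓ x) (hxN : N ≤ Hgt x)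
    {α : Fin n → ℝ} (hα : ∀ i, |α i| ≤ (R : ℝ))
    (happ : dnint (∑ i, (x i : ℝ) * α i) ≤ ψ (Hgt x)) :
    ∃ m j, covCond n ℓ ψ R N x m j ∧ α ∈ cubeSet n ℓ ψ x m j := by
  classical
  set h := Hgt x with hh
  have hh1 : 1 ≤ h := one_le_Hgt hℓ hn hx
  have hhR : (0 : ℝ) < (h : ℝ) := by exact_mod_cast hh1
  set δ := delta ψ h with hδ
  have hδpos : 0 < δ := div_pos (hpos h) hhR
  have hψδ : ψ h = (h : ℝ) * δ := by
    rw [hδ, delta]; field_simp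
  obtain ⟨i₀, hi₀, hi₀ℓ, hi₀abs⟩ := iidx_spec hℓ hn hx
  have hvaleq : ∀ i : Fin n, ((i : ℕ) = iidx n ℓ x ↔ i = i₀) := by
    intro i
    constructor
    · intro hhi; exact Fin.val_injective (hhi.trans hi₀.symm)
    · intro hhi; subst hhi; exact hi₀
  have habs_eq : ∀ i : Fin n, |(x i : ℝ)| = ((x i).natAbs : ℝ) := by
    intro i; rw [← Int.cast_abs, Int.abs_eq_natAbs, Int.cast_natCast]
  have hxi0abs : |(x i₀ : ℝ)| = (h : ℝ) := by rw [habs_eq, hi₀abs]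
  have hx0ne : (x i₀ : ℝ) ≠ 0 := by
    intro h0; rw [h0, abs_zero] at hxi0abs; exact absurd hxi0abs.symm (ne_of_gt hhR)
  set S := ∑ i, (x i : ℝ) * α i with hS
  set m := round S with hm
  set jb : Fin n → ℤ := fun i => ⌊α i / δ⌋ with hjbdef
  have hjb : ∀ i, jb i * δ ≤ α i ∧ α i < jb i * δ + δ := by
    intro i
    constructor
    · have := Int.floor_le (α i / δ)
      calc (jb i : ℝ) * δ ≤ α i / δ * δ := by
            apply mul_le_mul_of_nonneg_right this hδpos.le
        _ = α i := div_mul_cancel₀ _ (ne_of_gt hδpos)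
    · have := Int.lt_floor_add_one (α i / δ)
      have h2 : α i / δ * δ < ((jb i : ℝ) + 1) * δ := by
        apply mul_lt_mul_of_pos_right this hδpos
      rw [div_mul_cancel₀ _ (ne_of_gt hδpos)] at h2
      linarith
  set F := Finset.univ.filter (fun i' : Fin n => i' ≠ i₀) with hF
  set c : ℝ := ((m : ℝ) - ∑ i' ∈ F, (x i' : ℝ) * ((jb i' : ℝ) * δ)) / (x i₀ : ℝ) with hc
  set j : Fin n → ℤ := fun i =>
    if (i : ℕ) = iidx n ℓ x then ⌊(α i₀ - c) / δ⌋ else jb i with hjdef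
  -- key estimate
  have hcmul : (x i₀ : ℝ) * c = (m : ℝ) - ∑ i' ∈ F, (x i' : ℝ) * ((jb i' : ℝ) * δ) := by
    rw [hc, mul_comm, div_mul_cancel₀ _ hx0ne]
  have hSsplit : S = (x i₀ : ℝ) * α i₀ + ∑ i' ∈ F, (x i' : ℝ) * α i' := by
    rw [hS, hF, Finset.filter_ne' Finset.univ i₀]
    exact (Finset.add_sum_erase Finset.univ _ (Finset.mem_univ i₀)).symm
  have hxc : (x i₀ : ℝ) * (α i₀ - c) =
      (S - m) - ∑ i' ∈ F, (x i' : ℝ) * (α i' - jb i' * δ) := by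
    have expand : ∑ i' ∈ F, (x i' : ℝ) * (α i' - jb i' * δ)
        = ∑ i' ∈ F, (x i' : ℝ) * α i' - ∑ i' ∈ F, (x i' : ℝ) * ((jb i' : ℝ) * δ) := by
      rw [← Finset.sum_sub_distrib]
      exact Finset.sum_congr rfl (fun i' _ => by ring)
    rw [mul_sub, hcmul, expand, hSsplit]; ring
  have hterm : ∀ i' ∈ F, |(x i' : ℝ) * (α i' - jb i' * δ)| ≤ (h : ℝ) * δ := by
    intro i' _
    rw [abs_mul]
    apply mul_le_mul
    · rw [habs_eq]; exact_mod_cast natAbs_le_Hgt x i'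
    · have := hjb i'
      rw [abs_le]; constructor <;> [linarith [(hjb i').1]; linarith [(hjb i').2]]
    · exact abs_nonneg _
    · exact (Nat.cast_nonneg _)
  have hcardF : (F.card : ℝ) ≤ (n : ℝ) := by
    have : F.card ≤ Finset.univ.card := Finset.card_filter_le _ _
    have h' : F.card ≤ n := this.trans_eq (by simp)
    exact_mod_cast h'
  have hSm : |S - (m : ℝ)| ≤ ψ h := happ
  have hkey : |α i₀ - c| ≤ ((n : ℝ) + 1) * δ := by
    have h1 : |(x i₀ : ℝ) * (α i₀ - c)| ≤ ψ h + (n : ℝ) * ((h : ℝ) * δ) := by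
      rw [hxc]
      calc |(S - ↑m) - ∑ i' ∈ F, (x i' : ℝ) * (α i' - jb i' * δ)|
          ≤ |S - (m : ℝ)| + |∑ i' ∈ F, (x i' : ℝ) * (α i' - jb i' * δ)| := abs_sub _ _
        _ ≤ ψ h + (n : ℝ) * ((h : ℝ) * δ) := by
            apply add_le_add hSm
            calc |∑ i' ∈ F, (x i' : ℝ) * (α i' - jb i' * δ)|
                ≤ ∑ i' ∈ F, |(x i' : ℝ) * (α i' - jb i' * δ)| :=
                  Finset.abs_sum_le_sum_abs _ _
              _ ≤ ∑ _i' ∈ F, (h : ℝ) * δ := Finset.sum_le_sum hterm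
              _ = (F.card : ℝ) * ((h : ℝ) * δ) := by rw [Finset.sum_const]; ring
              _ ≤ (n : ℝ) * ((h : ℝ) * δ) := by
                  apply mul_le_mul_of_nonneg_right hcardF; positivity
    rw [abs_mul, hxi0abs, hψδ] at h1
    have h2 : (h : ℝ) * |α i₀ - c| ≤ (h : ℝ) * (((n : ℝ) + 1) * δ) := by nlinarith
    exact le_of_mul_le_mul_left h2 hhR
  refine ⟨m, j, ⟨hx, hxN, ?_, ?_, ?_⟩, ?_⟩
  · -- |m| bound
    have hSabs : |S| ≤ (n : ℝ) * (h : ℝ) * (R : ℝ) := by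
      calc |S| ≤ ∑ i, |(x i : ℝ) * α i| := Finset.abs_sum_le_sum_abs _ _
        _ ≤ ∑ _i : Fin n, (h : ℝ) * (R : ℝ) := by
            apply Finset.sum_le_sum
            intro i _
            rw [abs_mul]
            apply mul_le_mul (by rw [habs_eq]; exact_mod_cast natAbs_le_Hgt x i) (hα i)
              (abs_nonneg _) (Nat.cast_nonneg _)
        _ = (n : ℝ) * (h : ℝ) * (R : ℝ) := by rw [Finset.sum_const]; simp; ring
    have hmabs : |(m : ℝ)| ≤ (n : ℝ) * (h : ℝ) * (R : ℝ) + ψ 0 := by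
      have h1 : ψ h ≤ ψ 0 := hmono (Nat.zero_le h)
      have : |(m : ℝ)| ≤ |S| + |S - (m : ℝ)| := by
        have := abs_sub_abs_le_abs_sub S (m : ℝ)
        have h3 := abs_sub (S) ((m : ℝ))
        calc |(m : ℝ)| = |S - (S - (m:ℝ))| := by ring_nf
          _ ≤ |S| + |S - (m : ℝ)| := abs_sub _ _
      linarith
    have hceil := Int.le_ceil (ψ 0)
    rw [← @Int.cast_le ℝ]
    push_cast
    calc |(m : ℝ)| ≤ (n : ℝ) * (h : ℝ) * (R : ℝ) + ψ 0 := hmabs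
      _ ≤ (n : ℝ) * (h : ℝ) * (R : ℝ) + (⌈ψ 0⌉ : ℝ) := by linarith
  · -- |j i₀| bound
    intro i hi
    rw [hjdef]; simp only [if_pos hi]
    have ht : |(α i₀ - c) / δ| ≤ (n : ℝ) + 1 := by
      rw [abs_div, abs_of_pos hδpos, div_le_iff₀ hδpos]
      exact hkey
    rw [abs_le] at ht ⊢
    constructor
    · apply Int.le_floor.mpr
      push_cast
      linarith [ht.1]
    · have h1 : (⌊(α i₀ - c) / δ⌋ : ℝ) ≤ (α i₀ - c) / δ := Int.floor_le _
      rw [← @Int.cast_le ℝ]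
      push_cast
      linarith [ht.2]
  · -- |j i| bound, i ≠ i₀
    intro i hi
    rw [hjdef]; simp only [if_neg hi]
    have hu : |α i / δ| ≤ (R : ℝ) / δ := by
      rw [abs_div, abs_of_pos hδpos]
      gcongr
      exact hα i
    rw [abs_le] at hu ⊢
    have hceil := Int.le_ceil ((R : ℝ) / δ)
    constructor
    · apply Int.le_floor.mpr
      push_cast
      linarith [hu.1]
    · have h1 : (⌊α i / δ⌋ : ℝ) ≤ α i / δ := Int.floor_le _
      rw [← @Int.cast_le ℝ]
      push_cast
      linarith [hu.2]
  · -- membership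
    intro i _
    simp only [corner]
    by_cases hcase : (i : ℕ) = iidx n ℓ x
    · have hii : i = i₀ := (hvaleq i).1 hcase
      subst hii
      rw [if_pos hcase]
      have hsum_eq : ∑ i' ∈ Finset.univ.filter (fun i' => i' ≠ i), (x i' : ℝ) * ((j i' : ℝ) * δ)
          = ∑ i' ∈ F, (x i' : ℝ) * ((jb i' : ℝ) * δ) := by
        apply Finset.sum_congr rfl
        intro i' hi'
        have : i' ≠ i := (Finset.mem_filter.1 hi').2
        have : j i' = jb i' := by
          rw [hjdef]; simp only []
          rw [if_neg (fun hcc => this ((hvaleq i').1 hcc))]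
        rw [this]
      rw [hsum_eq, ← hc]
      have hji : j i = ⌊(α i - c) / δ⌋ := by rw [hjdef]; simp only [if_pos hcase]
      rw [hji]
      have hfl : (⌊(α i - c) / δ⌋ : ℝ) * δ ≤ α i - c ∧
          α i - c < (⌊(α i - c) / δ⌋ : ℝ) * δ + δ := by
        constructor
        · calc (⌊(α i - c) / δ⌋ : ℝ) * δ ≤ (α i - c) / δ * δ :=
              mul_le_mul_of_nonneg_right (Int.floor_le _) hδpos.le
            _ = α i - c := div_mul_cancel₀ _ (ne_of_gt hδpos)
        · have := Int.lt_floor_add_one ((α i - c) / δ)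
          have h2 : (α i - c) / δ * δ < ((⌊(α i - c) / δ⌋ : ℝ) + 1) * δ :=
            mul_lt_mul_of_pos_right this hδpos
          rw [div_mul_cancel₀ _ (ne_of_gt hδpos)] at h2
          linarith
      constructor
      · linarith [hfl.1]
      · linarith [hfl.2]
    · rw [if_neg hcase]
      have hji : j i = jb i := by rw [hjdef]; simp only [if_neg hcase]
      rw [hji]
      constructor
      · linarith [(hjb i).1]
      · linarith [(hjb i).2]

end MemCov
section Count

/-- the constant in the per-`x` cost bound -/
noncomputable def CRc (n R : ℕ) (ψ : ℕ → ℝ) : ℝ :=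
  (2*(n:ℝ)*R + 2*(⌈ψ 0⌉ : ℝ) + 1) * (2*(n:ℝ)+5) * (2*(R:ℝ) + 5*(ψ 0))^(n-1)

open Classical in
noncomputable def vbound (n : ℕ) (ψ : ℕ → ℝ) (f : ℝ → ℝ) (R N : ℕ) (h : ℕ) : ℝ≥0∞ :=
  if 1 ≤ h ∧ N ≤ h then
    ENNReal.ofReal (CRc n R ψ * ((h:ℝ) * (f (delta ψ h) / (delta ψ h)^(n-1)))) else 0

lemma tsum_cost_le {n ℓ : ℕ} (hℓ : 1 ≤ ℓ) (hn : ℓ ≤ n) {ψ : ℕ → ℝ} (hpos : ∀ h, 0 < ψ h)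
    (hmono : Antitone ψ) {f : ℝ → ℝ} (hf0 : f 0 = 0) (hfm : MonotoneOn f (Set.Ici 0))
    (R N : ℕ) (x : Fin n → ℤ) :
    ∑' q : ℤ × (Fin n → ℤ),
        ENNReal.ofReal (f (EMetric.diam (cov n ℓ ψ R N (x, q))).toReal)
      ≤ vbound n ψ f R N (Hgt x) := by
  classical
  by_cases hcc : cone ℓ x ∧ N ≤ Hgt x
  · obtain ⟨hx, hxN⟩ := hcc
    set h := Hgt x with hh
    have hh1 : 1 ≤ h := one_le_Hgt hℓ hn hx
    have hhR : (0 : ℝ) < (h : ℝ) := by exact_mod_cast hh1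
    set δ := delta ψ h with hδdef
    have hδpos : 0 < δ := div_pos (hpos h) hhR
    have hfδ : 0 ≤ f δ := by
      rw [← hf0]
      exact hfm (Set.mem_Ici.2 le_rfl) (Set.mem_Ici.2 hδpos.le) hδpos.le
    obtain ⟨i₀, hi₀, hi₀ℓ, hi₀abs⟩ := iidx_spec hℓ hn hx
    set M : ℤ := (n : ℤ) * h * R + ⌈ψ 0⌉ with hM
    set K : Fin n → ℤ := fun i => if (i : ℕ) = iidx n ℓ x then (n:ℤ)+2 else ⌈(R:ℝ)/δ⌉+1
      with hK
    set B : Finset (ℤ × (Fin n → ℤ)) :=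
      (Finset.Icc (-M) M) ×ˢ Fintype.piFinset (fun i => Finset.Icc (-(K i)) (K i)) with hB
    have hout : ∀ q ∉ B,
        ENNReal.ofReal (f (EMetric.diam (cov n ℓ ψ R N (x, q))).toReal) = 0 := by
      intro q hq
      rw [cov]
      split_ifs with hcov
      · exfalso
        apply hq
        obtain ⟨-, -, hm, hj1, hj2⟩ := hcov
        rw [hB, Finset.mem_product]
        constructor
        · rw [Finset.mem_Icc, ← abs_le]; exact hm
        · rw [Fintype.mem_piFinset]
          intro i
          rw [Finset.mem_Icc, ← abs_le, hK]
          by_cases hcase : (i : ℕ) = iidx n ℓ x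
          · simp only [if_pos hcase]; exact hj1 i hcase
          · simp only [if_neg hcase]; exact hj2 i hcase
      · simp [hf0, EMetric.diam]
    rw [tsum_eq_sum hout]
    have hterm : ∀ q ∈ B,
        ENNReal.ofReal (f (EMetric.diam (cov n ℓ ψ R N (x, q))).toReal)
          ≤ ENNReal.ofReal (f δ) := by
      intro q _
      rw [cov]
      split_ifs with hcov
      · apply ENNReal.ofReal_le_ofReal
        have hd := diam_cubeSet_le n ℓ ψ x q.1 q.2
        have hd2 : (EMetric.diam (cubeSet n ℓ ψ x q.1 q.2)).toReal ≤ δ := by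
          have := ENNReal.toReal_mono (ENNReal.ofReal_ne_top) hd
          rwa [ENNReal.toReal_ofReal hδpos.le] at this
        exact hfm (Set.mem_Ici.2 ENNReal.toReal_nonneg)
          (Set.mem_Ici.2 hδpos.le) hd2
      · simp [hf0, EMetric.diam]
    calc ∑ q ∈ B, ENNReal.ofReal (f (EMetric.diam (cov n ℓ ψ R N (x, q))).toReal)
        ≤ ∑ _q ∈ B, ENNReal.ofReal (f δ) := Finset.sum_le_sum hterm
      _ = (B.card : ℝ≥0∞) * ENNReal.ofReal (f δ) := by
          rw [Finset.sum_const, nsmul_eq_mul]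
      _ = ENNReal.ofReal ((B.card : ℝ) * f δ) := by
          rw [ENNReal.ofReal_mul (Nat.cast_nonneg _), ENNReal.ofReal_natCast]
      _ ≤ vbound n ψ f R N h := by
          rw [vbound, if_pos ⟨hh1, hxN⟩]
          apply ENNReal.ofReal_le_ofReal
          -- cardinality computation
          have hψ0pos := hpos 0
          have hceil0 : (1 : ℝ) ≤ (⌈ψ 0⌉ : ℝ) := by
            have : (1 : ℤ) ≤ ⌈ψ 0⌉ := by
              apply Int.le_ceil_iff.mpr; push_cast; linarith
            exact_mod_cast this
          have hceilZ : (1 : ℤ) ≤ ⌈ψ 0⌉ := by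
            apply Int.le_ceil_iff.mpr; push_cast; linarith
          have hδψ0 : δ ≤ ψ 0 := by
            calc δ = ψ h / h := hδdef
              _ ≤ ψ h / 1 := by
                  apply div_le_div_of_nonneg_left (hpos h).le one_pos
                  exact_mod_cast hh1
              _ = ψ h := div_one _
              _ ≤ ψ 0 := hmono (Nat.zero_le h)
          -- cardinalities
          have hcard1 : ((Finset.Icc (-M) M).card : ℝ)
              = 2*(n:ℝ)*h*R + 2*(⌈ψ 0⌉:ℝ) + 1 := by
            rw [Int.card_Icc]
            have hMnn : (0:ℤ) ≤ M := by
              have : (0:ℤ) ≤ (n : ℤ) * h * R := by positivity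
              omega
            have : ((M + 1 - -M).toNat : ℤ) = 2*M + 1 := by omega
            have h2 : (((M + 1 - -M).toNat : ℤ) : ℝ) = ((2*M + 1 : ℤ) : ℝ) := by
              exact_mod_cast this
            push_cast at h2 ⊢
            rw [h2]; rw [hM]; push_cast; ring
          have hcardi0 : ((Finset.Icc (-(K i₀)) (K i₀)).card : ℝ) = 2*(n:ℝ)+5 := by
            rw [Int.card_Icc, hK]
            simp only [if_pos hi₀]
            have : (((n:ℤ)+2) + 1 - -((n:ℤ)+2)).toNat = 2*n + 5 := by omega
            rw [this]; push_cast; ring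
          have hcardo : ∀ i : Fin n, i ≠ i₀ →
              ((Finset.Icc (-(K i)) (K i)).card : ℝ) ≤ (2*(R:ℝ) + 5*(ψ 0))/δ := by
            intro i hi
            have hval : (i : ℕ) ≠ iidx n ℓ x := by
              intro hcc2
              exact hi (Fin.val_injective (hcc2.trans hi₀.symm))
            rw [Int.card_Icc, hK]
            simp only [if_neg hval]
            have hRδnn : (0:ℝ) ≤ (R:ℝ)/δ := by positivity
            have hcnn : (0:ℤ) ≤ ⌈(R:ℝ)/δ⌉ := Int.ceil_nonneg hRδnn
            have h1 : ((⌈(R:ℝ)/δ⌉ + 1) + 1 - -(⌈(R:ℝ)/δ⌉ + 1)).toNat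
                = (2*⌈(R:ℝ)/δ⌉ + 3).toNat := by omega
            rw [h1]
            have h2 : (((2*⌈(R:ℝ)/δ⌉ + 3).toNat : ℤ) : ℝ) = 2*(⌈(R:ℝ)/δ⌉:ℝ) + 3 := by
              have : ((2*⌈(R:ℝ)/δ⌉ + 3).toNat : ℤ) = 2*⌈(R:ℝ)/δ⌉ + 3 := by omega
              rw [this]; push_cast; ring
            have h2' : (((2*⌈(R:ℝ)/δ⌉ + 3).toNat : ℕ) : ℝ) = 2*(⌈(R:ℝ)/δ⌉:ℝ) + 3 := by
              exact_mod_cast h2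
            rw [h2']
            have hlt : (⌈(R:ℝ)/δ⌉ : ℝ) < (R:ℝ)/δ + 1 := Int.ceil_lt_add_one _
            have hdiv : (1:ℝ) ≤ ψ 0 / δ := (one_le_div hδpos).mpr hδψ0
            have he1 : (2*(R:ℝ) + 5*(ψ 0))/δ = 2*((R:ℝ)/δ) + 5*(ψ 0/δ) := by ring
            rw [he1]
            linarith
          have hcardprod : ((Fintype.piFinset fun i => Finset.Icc (-(K i)) (K i)).card : ℝ)
              ≤ (2*(n:ℝ)+5) * ((2*(R:ℝ) + 5*(ψ 0))/δ)^(n-1) := by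
            rw [Fintype.card_piFinset]
            push_cast
            rw [← Finset.mul_prod_erase Finset.univ
              (fun i => ((Finset.Icc (-(K i)) (K i)).card : ℝ)) (Finset.mem_univ i₀)]
            rw [hcardi0]
            apply mul_le_mul_of_nonneg_left _ (by positivity)
            calc ∏ i ∈ Finset.univ.erase i₀, ((Finset.Icc (-(K i)) (K i)).card : ℝ)
                ≤ ∏ _i ∈ Finset.univ.erase i₀, (2*(R:ℝ) + 5*(ψ 0))/δ := by
                  apply Finset.prod_le_prod
                  · intro i _; positivity
                  · intro i hi
                    exact hcardo i (Finset.ne_of_mem_erase hi)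
              _ = ((2*(R:ℝ) + 5*(ψ 0))/δ)^(n-1) := by
                  rw [Finset.prod_const, Finset.card_erase_of_mem (Finset.mem_univ i₀)]
                  simp
          have hBcard : ((B.card : ℝ))
              ≤ (2*(n:ℝ)*h*R + 2*(⌈ψ 0⌉:ℝ) + 1)
                * ((2*(n:ℝ)+5) * ((2*(R:ℝ) + 5*(ψ 0))/δ)^(n-1)) := by
            rw [hB, Finset.card_product]
            push_cast
            rw [hcard1]
            apply mul_le_mul_of_nonneg_left hcardprod
            have : (0:ℝ) ≤ 2*(n:ℝ)*h*R := by positivity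
            have hc : (1:ℝ) ≤ (⌈ψ 0⌉:ℝ) := by exact_mod_cast hceilZ
            linarith
          have hA : (2*(n:ℝ)*h*R + 2*(⌈ψ 0⌉:ℝ) + 1)
              ≤ (2*(n:ℝ)*R + 2*(⌈ψ 0⌉:ℝ) + 1) * h := by
            have h1R : (1:ℝ) ≤ (h:ℝ) := by exact_mod_cast hh1
            have hc : (1:ℝ) ≤ (⌈ψ 0⌉:ℝ) := by exact_mod_cast hceilZ
            have hnn : (0:ℝ) ≤ (n:ℝ)*R := by positivity
            nlinarith
          calc ((B.card : ℝ)) * f δ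
              ≤ ((2*(n:ℝ)*h*R + 2*(⌈ψ 0⌉:ℝ) + 1)
                * ((2*(n:ℝ)+5) * ((2*(R:ℝ) + 5*(ψ 0))/δ)^(n-1))) * f δ := by
                apply mul_le_mul_of_nonneg_right hBcard hfδ
            _ ≤ (((2*(n:ℝ)*R + 2*(⌈ψ 0⌉:ℝ) + 1) * h)
                * ((2*(n:ℝ)+5) * ((2*(R:ℝ) + 5*(ψ 0))/δ)^(n-1))) * f δ := by
                apply mul_le_mul_of_nonneg_right _ hfδ
                apply mul_le_mul_of_nonneg_right hA (by positivity)
            _ = CRc n R ψ * ((h:ℝ) * (f (delta ψ h) / (delta ψ h)^(n-1))) := by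
                rw [CRc, div_pow, ← hδdef]
                field_simp
  · -- no valid x : everything is empty
    have h0 : ∀ q : ℤ × (Fin n → ℤ),
        ENNReal.ofReal (f (EMetric.diam (cov n ℓ ψ R N (x, q))).toReal) = 0 := by
      intro q
      rw [cov]
      split_ifs with hcov
      · exact absurd ⟨hcov.1, hcov.2.1⟩ hcc
      · simp [hf0, EMetric.diam]
    calc ∑' q : ℤ × (Fin n → ℤ),
          ENNReal.ofReal (f (EMetric.diam (cov n ℓ ψ R N (x, q))).toReal)
        = ∑' _q : ℤ × (Fin n → ℤ), (0:ℝ≥0∞) := tsum_congr h0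
      _ = 0 := tsum_zero
      _ ≤ _ := zero_le

end Count
section Shell

noncomputable def shell (n h : ℕ) : Finset (Fin n → ℤ) :=
  (Fintype.piFinset fun _ : Fin n => Finset.Icc (-(h:ℤ)) (h:ℤ)) \
  (Fintype.piFinset fun _ : Fin n => Finset.Icc (-(h:ℤ)+1) ((h:ℤ)-1))

lemma mem_shell {n : ℕ} (hn0 : 0 < n) {x : Fin n → ℤ} {h : ℕ} (hh : Hgt x = h) :
    x ∈ shell n h := by
  classical
  rw [shell, Finset.mem_sdiff]
  constructor
  · rw [Fintype.mem_piFinset]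
    intro i
    have := natAbs_le_Hgt x i
    rw [hh] at this
    rw [Finset.mem_Icc]
    omega
  · intro hmem
    rw [Fintype.mem_piFinset] at hmem
    have : Nonempty (Fin n) := ⟨⟨0, hn0⟩⟩
    obtain ⟨i, -, hie⟩ := Finset.exists_mem_eq_sup (Finset.univ : Finset (Fin n))
      Finset.univ_nonempty (fun i => (x i).natAbs)
    have h1 : (x i).natAbs = h := by rw [← hie, ← hh]; rfl
    have h2 := hmem i
    rw [Finset.mem_Icc] at h2
    omega

lemma shell_card_le {n h : ℕ} (hn0 : 0 < n) (h1 : 1 ≤ h) :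
    (shell n h).card ≤ 2 * n * (2*h+1)^(n-1) := by
  classical
  have hsub : (Fintype.piFinset fun _ : Fin n => Finset.Icc (-(h:ℤ)+1) ((h:ℤ)-1))
      ⊆ (Fintype.piFinset fun _ : Fin n => Finset.Icc (-(h:ℤ)) (h:ℤ)) :=
    Fintype.piFinset_subset _ _ (fun _ => Finset.Icc_subset_Icc (by omega) (by omega))
  rw [shell, Finset.card_sdiff_of_subset hsub]
  have hbig : (Fintype.piFinset fun _ : Fin n => Finset.Icc (-(h:ℤ)) (h:ℤ)).card
      = (2*h+1)^n := by
    rw [Fintype.card_piFinset]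
    have : (Finset.Icc (-(h:ℤ)) (h:ℤ)).card = 2*h+1 := by
      rw [Int.card_Icc]; omega
    simp [this]
  have hsml : (Fintype.piFinset fun _ : Fin n => Finset.Icc (-(h:ℤ)+1) ((h:ℤ)-1)).card
      = (2*h-1)^n := by
    rw [Fintype.card_piFinset]
    have : (Finset.Icc (-(h:ℤ)+1) ((h:ℤ)-1)).card = 2*h-1 := by
      rw [Int.card_Icc]; omega
    simp [this]
  rw [hbig, hsml]
  obtain ⟨k, hk⟩ : ∃ k, n = k + 1 := ⟨n - 1, by omega⟩
  subst hk
  have := nat_pow_sub_pow (2*h+1) (2*h-1) k (by omega)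
  have h2 : 2*h+1 - (2*h-1) = 2 := by omega
  rw [h2] at this
  have h3 : (k+1) - 1 = k := by omega
  rw [h3, Nat.sub_le_iff_le_add]
  exact this.trans (le_of_eq (by ring))

open Classical in
lemma tsum_vbound_le {n ℓ : ℕ} (hℓ : 1 ≤ ℓ) (hn : ℓ ≤ n) {ψ : ℕ → ℝ} (hpos : ∀ h, 0 < ψ h)
    {f : ℝ → ℝ} (hf0 : f 0 = 0) (hfm : MonotoneOn f (Set.Ici 0)) (R N : ℕ) :
    ∑' x : Fin n → ℤ, vbound n ψ f R N (Hgt x)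
      ≤ ENNReal.ofReal (2*(n:ℝ)*3^(n-1) * CRc n R ψ) *
        ∑' h : ℕ, (if N ≤ h then
          ENNReal.ofReal ((h:ℝ)^n * (f (ψ h / h) / (ψ h / h)^(n-1))) else 0) := by
  classical
  have hn0 : 0 < n := lt_of_lt_of_le hℓ hn
  set C : ℝ := 2*(n:ℝ)*3^(n-1) * CRc n R ψ with hC
  set u : ℕ → ℝ≥0∞ :=
    fun h => ENNReal.ofReal ((h:ℝ)^n * (f (ψ h / h) / (ψ h / h)^(n-1))) with hu
  have hCRnn : 0 ≤ CRc n R ψ := by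
    rw [CRc]
    have h1 : (1:ℝ) ≤ (⌈ψ 0⌉ : ℝ) := by
      have : (1 : ℤ) ≤ ⌈ψ 0⌉ := by
        apply Int.le_ceil_iff.mpr; push_cast; linarith [hpos 0]
      exact_mod_cast this
    have h2 : (0:ℝ) ≤ 2*(n:ℝ)*R := by positivity
    have h3 : (0:ℝ) ≤ (2*(R:ℝ) + 5*(ψ 0))^(n-1) := by
      have := hpos 0; positivity
    apply mul_nonneg (mul_nonneg (by linarith) (by positivity)) h3
  have hrw : ∀ x : Fin n → ℤ, vbound n ψ f R N (Hgt x)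
      = ∑' h : ℕ, (if h = Hgt x then vbound n ψ f R N h else 0) := by
    intro x
    have heq : (fun h : ℕ => if h = Hgt x then vbound n ψ f R N h else 0)
        = fun h : ℕ => if h = Hgt x then vbound n ψ f R N (Hgt x) else 0 := by
      funext h
      by_cases hc : h = Hgt x
      · simp [hc]
      · simp [hc]
    rw [heq, tsum_ite_eq]
  have hinner : ∀ h : ℕ,
      (∑' x : Fin n → ℤ, if h = Hgt x then vbound n ψ f R N h else 0)
        ≤ if N ≤ h then ENNReal.ofReal C * u h else 0 := by
    intro h
    by_cases hv : 1 ≤ h ∧ N ≤ h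
    · obtain ⟨hh1, hhN⟩ := hv
      have hout : ∀ x ∉ shell n h,
          (if h = Hgt x then vbound n ψ f R N h else 0) = 0 := by
        intro x hx
        rw [if_neg]
        intro hc
        exact hx (mem_shell hn0 hc.symm)
      rw [tsum_eq_sum hout]
      have hle : ∑ x ∈ shell n h, (if h = Hgt x then vbound n ψ f R N h else 0)
          ≤ (shell n h).card • vbound n ψ f R N h := by
        apply Finset.sum_le_card_nsmul
        intro x _
        split_ifs <;> simp
      refine hle.trans ?_
      rw [if_pos hhN]
      rw [nsmul_eq_mul]
      rw [vbound, if_pos ⟨hh1, hhN⟩]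
      -- real computation
      have hhR : (0 : ℝ) < (h : ℝ) := by exact_mod_cast hh1
      have h1R : (1 : ℝ) ≤ (h : ℝ) := by exact_mod_cast hh1
      set δ := delta ψ h with hδdef
      have hδpos : 0 < δ := div_pos (hpos h) hhR
      have hfδ : 0 ≤ f δ := by
        rw [← hf0]
        exact hfm (Set.mem_Ici.2 le_rfl) (Set.mem_Ici.2 hδpos.le) hδpos.le
      have hgnn : 0 ≤ f δ / δ^(n-1) := by positivity
      have hcard : ((shell n h).card : ℝ≥0∞) ≤ ((2 * n * (2*h+1)^(n-1) : ℕ) : ℝ≥0∞) := by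
        exact_mod_cast shell_card_le hn0 hh1
      calc ((shell n h).card : ℝ≥0∞)
            * ENNReal.ofReal (CRc n R ψ * ((h:ℝ) * (f δ / δ^(n-1))))
          ≤ ((2 * n * (2*h+1)^(n-1) : ℕ) : ℝ≥0∞)
            * ENNReal.ofReal (CRc n R ψ * ((h:ℝ) * (f δ / δ^(n-1)))) := by
            apply mul_le_mul_left hcard
        _ = ENNReal.ofReal ((2 * n * (2*h+1)^(n-1) : ℕ)
            * (CRc n R ψ * ((h:ℝ) * (f δ / δ^(n-1))))) := by
            rw [ENNReal.ofReal_mul (Nat.cast_nonneg _), ENNReal.ofReal_natCast]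
        _ ≤ ENNReal.ofReal (C * ((h:ℝ)^n * (f δ / δ^(n-1)))) := by
            apply ENNReal.ofReal_le_ofReal
            push_cast
            have hp1 : ((2*(h:ℝ)+1))^(n-1) ≤ (3*(h:ℝ))^(n-1) := by
              apply pow_le_pow_left₀ (by positivity)
              linarith
            have hp2 : (3*(h:ℝ))^(n-1) = 3^(n-1) * (h:ℝ)^(n-1) := mul_pow _ _ _
            have hp3 : (h:ℝ)^(n-1) * (h:ℝ) = (h:ℝ)^n := by
              rw [← pow_succ]
              congr 1
              omega
            have key : (2*(n:ℝ)) * ((2*(h:ℝ)+1))^(n-1)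
                ≤ (2*(n:ℝ)) * (3^(n-1) * (h:ℝ)^(n-1)) := by
              rw [← hp2]
              apply mul_le_mul_of_nonneg_left hp1 (by positivity)
            calc (2*(n:ℝ)) * ((2*(h:ℝ)+1))^(n-1)
                  * (CRc n R ψ * ((h:ℝ) * (f δ / δ^(n-1))))
                ≤ (2*(n:ℝ)) * (3^(n-1) * (h:ℝ)^(n-1))
                  * (CRc n R ψ * ((h:ℝ) * (f δ / δ^(n-1)))) := by
                  apply mul_le_mul_of_nonneg_right key
                  positivity
              _ = C * ((h:ℝ)^(n-1) * (h:ℝ) * (f δ / δ^(n-1))) := by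
                  rw [hC]; ring
              _ = C * ((h:ℝ)^n * (f δ / δ^(n-1))) := by rw [hp3]
        _ = ENNReal.ofReal C * u h := by
            rw [ENNReal.ofReal_mul (by
              rw [hC]
              exact mul_nonneg (by positivity) hCRnn)]
            rw [hu]
            simp only [hδdef, delta]
    · have hz : vbound n ψ f R N h = 0 := by rw [vbound, if_neg hv]
      have : (∑' x : Fin n → ℤ, if h = Hgt x then vbound n ψ f R N h else 0) = 0 := by
        rw [hz]
        simp
      rw [this]
      exact zero_le
  calc ∑' x : Fin n → ℤ, vbound n ψ f R N (Hgt x)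
      = ∑' (x : Fin n → ℤ) (h : ℕ), (if h = Hgt x then vbound n ψ f R N h else 0) :=
        tsum_congr hrw
    _ = ∑' (h : ℕ) (x : Fin n → ℤ), (if h = Hgt x then vbound n ψ f R N h else 0) :=
        ENNReal.tsum_comm
    _ ≤ ∑' h : ℕ, (if N ≤ h then ENNReal.ofReal C * u h else 0) :=
        ENNReal.tsum_le_tsum hinner
    _ = ENNReal.ofReal C * ∑' h : ℕ, (if N ≤ h then u h else 0) := by
        rw [← ENNReal.tsum_mul_left]
        apply tsum_congr
        intro h
        split_ifs <;> simp
  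
end Shell
section Tail

open Classical in
lemma tail_tendsto {u : ℕ → ℝ≥0∞} (hu : ∑' h, u h ≠ ⊤) :
    Filter.Tendsto (fun N => ∑' h : ℕ, (if N ≤ h then u h else 0))
      Filter.atTop (nhds 0) := by
  have heq : ∀ N : ℕ, ∑' h : ℕ, (if N ≤ h then u h else 0) = ∑' k : ℕ, u (k + N) := by
    intro N
    have hinj : Function.Injective (fun k : ℕ => k + N) := fun a b hab => by simpa using hab
    rw [← Function.Injective.tsum_eq hinj (f := fun h => if N ≤ h then u h else 0) ?_]
    · apply tsum_congr; intro k
      rw [if_pos (by omega : N ≤ k + N)]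
    · intro h hh
      rw [Function.mem_support] at hh
      by_cases hc : N ≤ h
      · exact ⟨h - N, by simp; omega⟩
      · rw [if_neg hc] at hh; exact absurd rfl hh
  have := ENNReal.tendsto_sum_nat_add u hu
  refine Filter.Tendsto.congr ?_ this
  intro N
  rw [heq]

end Tail
theorem hausdorff_f_measure_zero_of_convergence (n ℓ : ℕ) (hℓ : 1 ≤ ℓ) (hn : ℓ ≤ n)
    (ψ : ℕ → ℝ) (hpos : ∀ h, 0 < ψ h) (hmono : Antitone ψ)
    (f : ℝ → ℝ) (hf0 : f 0 = 0) (hfc : ContinuousOn f (Set.Ici 0))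
    (hfm : MonotoneOn f (Set.Ici 0))
    (hscale : MonotoneOn (fun r => f r / r ^ n) (Set.Ioi (0 : ℝ)))
    (hgc : ContinuousOn (fun r => f r / r ^ (n - 1)) (Set.Ici 0))
    (hgm : MonotoneOn (fun r => f r / r ^ (n - 1)) (Set.Ici 0))
    (hconv : Summable fun r : ℕ => (r : ℝ) ^ n * (f (ψ r / r) / (ψ r / r) ^ (n - 1))) :
    Measure.mkMetric (fun d : ℝ≥0∞ => ENNReal.ofReal (f d.toReal))
      {α : Fin n → ℝ | {x : Fin n → ℤ | cone ℓ x ∧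
        dnint (∑ i, (x i : ℝ) * α i) ≤ ψ (Hgt x)}.Infinite} = 0 := by
  classical
  have hn0 : 0 < n := lt_of_lt_of_le hℓ hn
  set m0 : ℝ≥0∞ → ℝ≥0∞ := fun d => ENNReal.ofReal (f d.toReal) with hm0
  set E : Set (Fin n → ℝ) := {α : Fin n → ℝ | {x : Fin n → ℤ | cone ℓ x ∧
        dnint (∑ i, (x i : ℝ) * α i) ≤ ψ (Hgt x)}.Infinite} with hE
  set Q : ℕ → Set (Fin n → ℝ) := fun R => {α : Fin n → ℝ | ∀ i, |α i| ≤ (R : ℝ)} with hQ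
  -- the summable series in ℝ≥0∞
  set u : ℕ → ℝ≥0∞ :=
    fun h => ENNReal.ofReal ((h:ℝ)^n * (f (ψ h / h) / (ψ h / h)^(n-1))) with hu
  have hunn : ∀ h : ℕ, 0 ≤ (h:ℝ)^n * (f (ψ h / h) / (ψ h / h)^(n-1)) := by
    intro h
    rcases Nat.eq_zero_or_pos h with hz | hp
    · subst hz
      simp [zero_pow hn0.ne']
    · have hhR : (0:ℝ) < (h:ℝ) := by exact_mod_cast hp
      have hδpos : (0:ℝ) < ψ h / h := div_pos (hpos h) hhR
      have hfδ : 0 ≤ f (ψ h / h) := by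
        rw [← hf0]
        exact hfm (Set.mem_Ici.2 le_rfl) (Set.mem_Ici.2 hδpos.le) hδpos.le
      positivity
  have hutop : ∑' h, u h ≠ ⊤ := by
    rw [hu, ← ENNReal.ofReal_tsum_of_nonneg hunn hconv]
    exact ENNReal.ofReal_ne_top
  -- the tail sums tend to zero
  have htail := tail_tendsto hutop
  -- key: measure of E ∩ Q R is zero
  have key : ∀ R : ℕ, Measure.mkMetric m0 (E ∩ Q R) = 0 := by
    intro R
    refine le_antisymm ?_ (zero_le)
    have hr : Filter.Tendsto (fun N : ℕ => ENNReal.ofReal (ψ N / N))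
        Filter.atTop (nhds 0) := by
      have h1 : Filter.Tendsto (fun N : ℕ => ψ N / N) Filter.atTop (nhds 0) := by
        have h0 : ∀ N : ℕ, 0 ≤ ψ N / N :=
          fun N => div_nonneg (hpos N).le (Nat.cast_nonneg N)
        refine squeeze_zero (g := fun N : ℕ => ψ 0 * (1 / (N:ℝ))) h0 ?_ ?_
        · intro N
          rcases Nat.eq_zero_or_pos N with hz | hp
          · subst hz; simp
          · have hNR : (0:ℝ) < (N:ℝ) := by exact_mod_cast hp
            show ψ N / ↑N ≤ ψ 0 * (1 / ↑N)
            rw [mul_one_div]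
            exact div_le_div_of_nonneg_right (hmono (Nat.zero_le N)) hNR.le
        · have := tendsto_one_div_atTop_nhds_zero_nat (𝕜 := ℝ)
          have h2 := this.const_mul (ψ 0)
          simpa using h2
      have h2 := ENNReal.tendsto_ofReal h1
      simpa using h2
    have ht : ∀ᶠ N : ℕ in Filter.atTop, ∀ p : (Fin n → ℤ) × ℤ × (Fin n → ℤ),
        EMetric.diam (cov n ℓ ψ R N p) ≤ ENNReal.ofReal (ψ N / N) := by
      filter_upwards [Filter.eventually_ge_atTop 1] with N hN1 p
      rw [cov]
      split_ifs with hcov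
      · refine (diam_cubeSet_le n ℓ ψ p.1 p.2.1 p.2.2).trans ?_
        apply ENNReal.ofReal_le_ofReal
        obtain ⟨hx, hxN, -⟩ := hcov
        have hh1 : 1 ≤ Hgt p.1 := one_le_Hgt hℓ hn hx
        have hNR : (0:ℝ) < (N:ℝ) := by exact_mod_cast hN1
        have hhN : (N:ℝ) ≤ (Hgt p.1 : ℝ) := by exact_mod_cast hxN
        rw [delta]
        apply div_le_div₀ (hpos N).le (hmono (by omega)) hNR hhN
      · simp [EMetric.diam]
    have hst : ∀ᶠ N : ℕ in Filter.atTop,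
        E ∩ Q R ⊆ ⋃ p : (Fin n → ℤ) × ℤ × (Fin n → ℤ), cov n ℓ ψ R N p := by
      apply Filter.Eventually.of_forall
      intro N α hα
      obtain ⟨hαE, hαQ⟩ := hα
      have hinf : {x : Fin n → ℤ | cone ℓ x ∧
          dnint (∑ i, (x i : ℝ) * α i) ≤ ψ (Hgt x)}.Infinite := hαE
      obtain ⟨x, hxA, hxB⟩ := (hinf.diff (finite_Hgt_lt n N)).nonempty
      have hxN : N ≤ Hgt x := by
        by_contra hc
        exact hxB (by simpa using Nat.lt_of_not_le hc)
      obtain ⟨hxcone, hxapp⟩ := hxA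
      obtain ⟨m, j, hcond, hmem⟩ :=
        mem_cov hℓ hn hpos hmono R N hxcone hxN (fun i => hαQ i) hxapp
      apply Set.mem_iUnion.2
      refine ⟨(x, m, j), ?_⟩
      rw [cov, if_pos hcond]
      exact hmem
    refine le_trans
      (Measure.mkMetric_le_liminf_tsum (E ∩ Q R) _ hr (fun N => cov n ℓ ψ R N) ht hst m0) ?_
    -- bound the liminf
    set C : ℝ := 2*(n:ℝ)*3^(n-1) * CRc n R ψ with hC
    have hTle : ∀ N : ℕ,
        (∑' p : (Fin n → ℤ) × ℤ × (Fin n → ℤ), m0 (EMetric.diam (cov n ℓ ψ R N p)))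
          ≤ ENNReal.ofReal C * ∑' h : ℕ, (if N ≤ h then u h else 0) := by
      intro N
      calc (∑' p : (Fin n → ℤ) × ℤ × (Fin n → ℤ), m0 (EMetric.diam (cov n ℓ ψ R N p)))
          = ∑' (x : Fin n → ℤ) (q : ℤ × (Fin n → ℤ)),
              ENNReal.ofReal (f (EMetric.diam (cov n ℓ ψ R N (x, q))).toReal) := by
            rw [hm0]
            exact ENNReal.tsum_prod (f := fun x q =>
              ENNReal.ofReal (f (EMetric.diam (cov n ℓ ψ R N (x, q))).toReal))
        _ ≤ ∑' x : Fin n → ℤ, vbound n ψ f R N (Hgt x) :=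
            ENNReal.tsum_le_tsum (fun x =>
              tsum_cost_le hℓ hn hpos hmono hf0 hfm R N x)
        _ ≤ ENNReal.ofReal C * ∑' h : ℕ, (if N ≤ h then u h else 0) := by
            rw [hC, hu]
            exact tsum_vbound_le hℓ hn hpos hf0 hfm R N
    have hlim : Filter.Tendsto
        (fun N : ℕ => ENNReal.ofReal C * ∑' h : ℕ, (if N ≤ h then u h else 0))
        Filter.atTop (nhds 0) := by
      have := ENNReal.Tendsto.const_mul (a := ENNReal.ofReal C) htail (Or.inr ENNReal.ofReal_ne_top)
      simpa using this
    calc Filter.liminf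
          (fun N : ℕ => ∑' p : (Fin n → ℤ) × ℤ × (Fin n → ℤ),
            m0 (EMetric.diam (cov n ℓ ψ R N p))) Filter.atTop
        ≤ Filter.liminf
          (fun N : ℕ => ENNReal.ofReal C * ∑' h : ℕ, (if N ≤ h then u h else 0))
          Filter.atTop := Filter.liminf_le_liminf (Filter.Eventually.of_forall hTle)
      _ = 0 := hlim.liminf_eq
  -- assemble
  have hcover : E ⊆ ⋃ R : ℕ, E ∩ Q R := by
    intro α hα
    apply Set.mem_iUnion.2
    refine ⟨⌈∑ i, |α i|⌉₊, hα, ?_⟩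
    intro i
    have h1 : |α i| ≤ ∑ i', |α i'| :=
      Finset.single_le_sum (fun i' _ => abs_nonneg (α i')) (Finset.mem_univ i)
    exact h1.trans (Nat.le_ceil _)
  refine le_antisymm ?_ (zero_le)
  calc Measure.mkMetric m0 E ≤ Measure.mkMetric m0 (⋃ R : ℕ, E ∩ Q R) :=
        measure_mono hcover
    _ = 0 := measure_iUnion_null (fun R => key R)
end

section
/- For any positive integer a and any integers 1 ≤ ℓ ≤ n − 1, the polynomial Xⁿ − 2(aX − 1)^ℓ is irreducible over ℚ. -/
open Polynomial

theorem poly_irreducible (n ℓ a : ℕ) (ha : 1 ≤ a) (hℓ : 1 ≤ ℓ) (hn : ℓ ≤ n - 1) :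
    Irreducible ((X : ℚ[X]) ^ n - C 2 * (C (a : ℚ) * X - 1) ^ ℓ) := by
  have hn2 : 2 ≤ n := by omega
  set q : ℤ[X] := (C (a : ℤ) * X - 1) ^ ℓ with hq
  set p : ℤ[X] := X ^ n - C 2 * q with hp
  have ha' : (a : ℤ) ≠ 0 := by exact_mod_cast Nat.one_le_iff_ne_zero.mp ha
  have hdeg1 : (C (a : ℤ) * X - 1).degree = 1 := by
    have h : (C (a : ℤ) * X - 1) = C (a : ℤ) * X + C (-1) := by
      rw [C_neg, C_1]; ring
    rw [h]
    exact degree_linear ha'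
  have hqdeg : q.degree = (ℓ : ℕ) := by
    rw [hq, degree_pow, hdeg1]; simp
  have h2q : (C (2 : ℤ) * q).degree < (n : ℕ) := by
    rw [degree_C_mul (by norm_num), hqdeg]
    exact_mod_cast show ℓ < n by omega
  have hmonic : p.Monic := monic_X_pow_sub h2q
  have hnd : p.natDegree = n := by
    have : p.degree = n := by
      rw [hp, sub_eq_add_neg]
      rw [degree_add_eq_left_of_degree_lt]
      · exact degree_X_pow n
      · rw [degree_neg, degree_X_pow]
        exact h2q
    exact natDegree_eq_of_degree_eq_some this
  -- Eisenstein at 2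
  have hIprime : (Ideal.span {(2 : ℤ)}).IsPrime := by
    rw [Ideal.span_singleton_prime (by norm_num)]
    exact Int.prime_two
  have heis : p.IsEisensteinAt (Ideal.span {(2 : ℤ)}) := by
    constructor
    · rw [hmonic.leadingCoeff, Ideal.mem_span_singleton]
      norm_num
    · intro i hi
      rw [hnd] at hi
      rw [hp, coeff_sub, coeff_X_pow, if_neg (by omega), coeff_C_mul]
      rw [Ideal.mem_span_singleton]
      exact ⟨-(q.coeff i), by ring⟩
    · rw [hp, coeff_sub, coeff_X_pow, if_neg (by omega), coeff_C_mul]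
      have hq0 : q.coeff 0 = (-1 : ℤ) ^ ℓ := by
        rw [hq, coeff_zero_eq_eval_zero]
        simp
      rw [hq0, Ideal.span_singleton_pow, Ideal.mem_span_singleton]
      rcases Nat.even_or_odd ℓ with h | h
      · rw [h.neg_one_pow]; decide
      · rw [h.neg_one_pow]; decide
  have hirrZ : Irreducible p :=
    heis.irreducible hIprime hmonic.isPrimitive (by omega)
  have hmap : p.map (Int.castRingHom ℚ) =
      (X : ℚ[X]) ^ n - C 2 * (C (a : ℚ) * X - 1) ^ ℓ := by
    simp only [hp, hq, Polynomial.map_sub, Polynomial.map_mul, Polynomial.map_pow,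
      Polynomial.map_one, Polynomial.map_X, Polynomial.map_C]
    norm_num
  rw [← hmap]
  exact (IsPrimitive.Int.irreducible_iff_irreducible_map_cast hmonic.isPrimitive).mp hirrZ
end
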